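/- arXiv:1705.03561 — 5 statements merged into one kernel-verified Lean document; each statement's English description precedes it below -/
import Mathlib

section
/- Let H be a 3-uniform linear hypergraph containing no Berge cycle of length 5, and let v be a vertex of H. Then the number of hyperedges h of H with |h ∩ N₁(v)| ≥ 2, where N₁(v) is the set of vertices sharing a hyperedge with v, is at most 6·d(v), where d(v) is the degree of v in H. -/
open Finset

/-- Degree of a vertex: number of hyperedges containing it. -/
def hyperDeg {V : Type*} [DecidableEq V] (H : Finset (Finset V)) (v : V) : ℕ :=
  (H.filter fun e => v ∈ e).card

/-- First neighborhood: vertices other than `v` sharing a hyperedge with `v`. -/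
def N1 {V : Type*} [DecidableEq V] (H : Finset (Finset V)) (v : V) : Finset V :=
  ((H.filter fun e => v ∈ e).biUnion id).erase v

/-- A hypergraph is linear if any two distinct hyperedges share at most one vertex. -/
def IsLinear {V : Type*} [DecidableEq V] (H : Finset (Finset V)) : Prop :=
  ∀ e ∈ H, ∀ f ∈ H, e ≠ f → (e ∩ f).card ≤ 1

/-- A Berge cycle of length `k`: `k` distinct vertices and `k` distinct hyperedges,
with `v i, v (i+1) ∈ h i` cyclically. -/
def HasBergeCycle {V : Type*} (H : Finset (Finset V)) (k : ℕ) : Prop :=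
  ∃ (v : ZMod k → V) (h : ZMod k → Finset V),
    Function.Injective v ∧ Function.Injective h ∧
    ∀ i, h i ∈ H ∧ v i ∈ h i ∧ v (i + 1) ∈ h i

set_option linter.unusedSectionVars false

section AuxC5

variable {V : Type*} [DecidableEq V]

lemma berge5 (H : Finset (Finset V)) (v0 v1 v2 v3 v4 : V) (e0 e1 e2 e3 e4 : Finset V)
    (d01 : v0 ≠ v1) (d02 : v0 ≠ v2) (d03 : v0 ≠ v3) (d04 : v0 ≠ v4)
    (d12 : v1 ≠ v2) (d13 : v1 ≠ v3) (d14 : v1 ≠ v4)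
    (d23 : v2 ≠ v3) (d24 : v2 ≠ v4) (d34 : v3 ≠ v4)
    (f01 : e0 ≠ e1) (f02 : e0 ≠ e2) (f03 : e0 ≠ e3) (f04 : e0 ≠ e4)
    (f12 : e1 ≠ e2) (f13 : e1 ≠ e3) (f14 : e1 ≠ e4)
    (f23 : e2 ≠ e3) (f24 : e2 ≠ e4) (f34 : e3 ≠ e4)
    (m0 : e0 ∈ H) (m1 : e1 ∈ H) (m2 : e2 ∈ H) (m3 : e3 ∈ H) (m4 : e4 ∈ H)
    (i00 : v0 ∈ e0) (i10 : v1 ∈ e0)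
    (i11 : v1 ∈ e1) (i21 : v2 ∈ e1)
    (i22 : v2 ∈ e2) (i32 : v3 ∈ e2)
    (i33 : v3 ∈ e3) (i43 : v4 ∈ e3)
    (i44 : v4 ∈ e4) (i04 : v0 ∈ e4) : HasBergeCycle H 5 := by
  refine ⟨![v0, v1, v2, v3, v4], ![e0, e1, e2, e3, e4], ?_, ?_, ?_⟩
  · intro i j hij
    fin_cases i <;> fin_cases j <;> simp_all <;> rfl
  · intro i j hij
    fin_cases i <;> fin_cases j <;> simp_all <;> rfl
  · intro i
    fin_cases i <;>
      refine ⟨by assumption, by assumption, ?_⟩ <;>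
      simp_all [show ((0:ZMod 5)+1) = 1 by decide, show ((1:ZMod 5)+1) = 2 by decide,
        show ((2:ZMod 5)+1) = 3 by decide, show ((3:ZMod 5)+1) = 4 by decide,
        show ((4:ZMod 5)+1) = 0 by decide] <;> assumption

lemma pair_unique {H : Finset (Finset V)} (hLin : IsLinear H) {e f : Finset V}
    (he : e ∈ H) (hf : f ∈ H) {x y : V} (hxy : x ≠ y)
    (hxe : x ∈ e) (hye : y ∈ e) (hxf : x ∈ f) (hyf : y ∈ f) : e = f := by
  by_contra hne
  have h1 := hLin e he f hf hne
  have h2 : 1 < (e ∩ f).card :=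
    Finset.one_lt_card.mpr ⟨x, by simp [hxe, hxf], y, by simp [hye, hyf], hxy⟩
  omega

lemma mem_N1' {H : Finset (Finset V)} {v : V} {e : Finset V} (he : e ∈ H) (hv : v ∈ e)
    {u : V} (hu : u ∈ e) (huv : u ≠ v) : u ∈ N1 H v := by
  simp only [N1, Finset.mem_erase, Finset.mem_biUnion, Finset.mem_filter, id]
  exact ⟨huv, e, ⟨he, hv⟩, hu⟩

lemma N1_spec {H : Finset (Finset V)} {v u : V} (hu : u ∈ N1 H v) :
    u ≠ v ∧ ∃ e, e ∈ H ∧ v ∈ e ∧ u ∈ e := by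
  simp only [N1, Finset.mem_erase, Finset.mem_biUnion, Finset.mem_filter, id] at hu
  obtain ⟨huv, e, ⟨he, hv⟩, hue⟩ := hu
  exact ⟨huv, e, he, hv, hue⟩

/-- the unique hyperedge containing `v` and `u`. -/
noncomputable def partOf (H : Finset (Finset V)) (v u : V) : Finset V :=
  if h : ∃ e, e ∈ H ∧ v ∈ e ∧ u ∈ e then h.choose else ∅

lemma partOf_spec {H : Finset (Finset V)} {v u : V} (hu : u ∈ N1 H v) :
    partOf H v u ∈ H ∧ v ∈ partOf H v u ∧ u ∈ partOf H v u := by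
  obtain ⟨_, hex⟩ := N1_spec hu
  rw [partOf, dif_pos hex]
  exact hex.choose_spec

lemma partOf_eq {H : Finset (Finset V)} (hLin : IsLinear H) {v u : V} (hu : u ∈ N1 H v)
    {e : Finset V} (he : e ∈ H) (hv : v ∈ e) (hue : u ∈ e) : partOf H v u = e := by
  obtain ⟨huv, _⟩ := N1_spec hu
  obtain ⟨hp1, hp2, hp3⟩ := partOf_spec hu
  exact pair_unique hLin hp1 he (Ne.symm huv) hp2 hp3 hv hue

lemma not_mem_part {H : Finset (Finset V)} (hLin : IsLinear H) {v u : V} (hu : u ∈ N1 H v)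
    {e : Finset V} (he : e ∈ H) (hv : v ∈ e) (hne : partOf H v u ≠ e) : u ∉ e :=
  fun hue => hne (partOf_eq hLin hu he hv hue)

/-- choose an element of `h ∩ N1 H v` different from `c`. -/
noncomputable def secondVtx (H : Finset (Finset V)) (v c : V) (h : Finset V) : V :=
  if hc : 1 < (h ∩ N1 H v).card then (Finset.exists_mem_ne hc c).choose else v

lemma secondVtx_spec {H : Finset (Finset V)} {v c : V} {h : Finset V}
    (hc : 1 < (h ∩ N1 H v).card) :
    secondVtx H v c h ∈ h ∧ secondVtx H v c h ∈ N1 H v ∧ secondVtx H v c h ≠ c := by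
  rw [secondVtx, dif_pos hc]
  obtain ⟨hm, hne⟩ := (Finset.exists_mem_ne hc c).choose_spec
  exact ⟨(Finset.mem_inter.mp hm).1, (Finset.mem_inter.mp hm).2, hne⟩

lemma eq_triple {e : Finset V} (h3 : e.card = 3) {v : V} (hv : v ∈ e) :
    ∃ a b, a ≠ b ∧ a ≠ v ∧ b ≠ v ∧ e = {v, a, b} := by
  obtain ⟨x, y, z, hxy, hxz, hyz, rfl⟩ := Finset.card_eq_three.mp h3
  simp only [Finset.mem_insert, Finset.mem_singleton] at hv
  rcases hv with rfl | rfl | rfl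
  · exact ⟨y, z, hyz, Ne.symm hxy, Ne.symm hxz, rfl⟩
  · refine ⟨x, z, hxz, hxy, Ne.symm hyz, ?_⟩
    ext w; simp only [Finset.mem_insert, Finset.mem_singleton]; tauto
  · refine ⟨x, y, hxy, hxz, hyz, ?_⟩
    ext w; simp only [Finset.mem_insert, Finset.mem_singleton]; tauto

/-- the counted hyperedges -/
def Fset (H : Finset (Finset V)) (v : V) : Finset (Finset V) :=
  H.filter fun h => 2 ≤ (h ∩ N1 H v).card

/-- the counted hyperedges not containing `v` -/
def Fo (H : Finset (Finset V)) (v : V) : Finset (Finset V) :=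
  (Fset H v).filter fun h => v ∉ h

/-- counted outside hyperedges meeting `e` -/
def fib (H : Finset (Finset V)) (v : V) (e : Finset V) : Finset (Finset V) :=
  (Fo H v).filter fun h => 0 < (h ∩ e).card

lemma mem_Fo {H : Finset (Finset V)} {v : V} {h : Finset V} (hh : h ∈ Fo H v) :
    h ∈ H ∧ v ∉ h ∧ 2 ≤ (h ∩ N1 H v).card := by
  simp only [Fo, Fset, Finset.mem_filter] at hh
  tauto

lemma mem_fib {H : Finset (Finset V)} {v : V} {e h : Finset V} (hh : h ∈ fib H v e) :
    h ∈ Fo H v ∧ ∃ w, w ∈ h ∧ w ∈ e := by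
  simp only [fib, Finset.mem_filter, Finset.card_pos] at hh
  obtain ⟨h1, w, hw⟩ := hh
  rw [Finset.mem_inter] at hw
  exact ⟨h1, w, hw⟩

lemma mem_fib_of {H : Finset (Finset V)} {v : V} {e h : Finset V} (hh : h ∈ Fo H v)
    {w : V} (hw : w ∈ h) (hwe : w ∈ e) : h ∈ fib H v e := by
  simp only [fib, Finset.mem_filter, Finset.card_pos]
  exact ⟨hh, ⟨w, Finset.mem_inter.mpr ⟨hw, hwe⟩⟩⟩

end AuxC5

section Main

variable {V : Type*} [DecidableEq V]

lemma stepB {H : Finset (Finset V)} {v : V} (hUnif : ∀ e ∈ H, e.card = 3) (hLin : IsLinear H)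
    {e : Finset V} {c : V} (hc : ∀ h' ∈ fib H v e, c ∈ h')
    (hbig : 6 ≤ (fib H v e).card)
    {t1 t2 : Finset V} (ht1 : t1 ∈ H) (hvt1 : v ∈ t1) (ht2 : t2 ∈ H) (hvt2 : v ∈ t2)
    (h : Finset V) :
    ∃ h' ∈ fib H v e, h' ≠ h ∧ ∃ z, z ∈ h' ∧ z ∈ N1 H v ∧ z ≠ c ∧
      partOf H v z ≠ t1 ∧ partOf H v z ≠ t2 := by
  by_contra hcon
  push_neg at hcon
  have hmaps : ∀ h' ∈ (fib H v e).erase h,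
      secondVtx H v c h' ∈ (t1.erase v) ∪ (t2.erase v) := by
    intro h' hh'
    obtain ⟨hne, hmem⟩ := Finset.mem_erase.mp hh'
    obtain ⟨hFo, -⟩ := mem_fib hmem
    obtain ⟨-, -, h2c⟩ := mem_Fo hFo
    obtain ⟨hz1, hz2, hz3⟩ :=
      secondVtx_spec (v := v) (c := c) (show 1 < (h' ∩ N1 H v).card by omega)
    have hznv : secondVtx H v c h' ≠ v := (N1_spec hz2).1
    have hcon' := hcon h' hmem hne _ hz1 hz2 hz3
    rw [Finset.mem_union, Finset.mem_erase, Finset.mem_erase]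
    by_cases hp : partOf H v (secondVtx H v c h') = t1
    · exact Or.inl ⟨hznv, by rw [← hp]; exact (partOf_spec hz2).2.2⟩
    · exact Or.inr ⟨hznv, by rw [← hcon' hp]; exact (partOf_spec hz2).2.2⟩
  have hinj : Set.InjOn (secondVtx H v c) ((fib H v e).erase h) := by
    intro g1 hg1 g2 hg2 heq
    rw [Finset.mem_coe, Finset.mem_erase] at hg1 hg2
    obtain ⟨-, hm1⟩ := hg1
    obtain ⟨-, hm2⟩ := hg2
    obtain ⟨hFo1, -⟩ := mem_fib hm1
    obtain ⟨hH1, -, hc1⟩ := mem_Fo hFo1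
    obtain ⟨hFo2, -⟩ := mem_fib hm2
    obtain ⟨hH2, -, hc2⟩ := mem_Fo hFo2
    obtain ⟨hz1, -, hz3⟩ :=
      secondVtx_spec (v := v) (c := c) (show 1 < (g1 ∩ N1 H v).card by omega)
    obtain ⟨hw1, -, -⟩ :=
      secondVtx_spec (v := v) (c := c) (show 1 < (g2 ∩ N1 H v).card by omega)
    exact pair_unique hLin hH1 hH2 hz3 hz1 (hc g1 hm1) (by rw [heq]; exact hw1) (hc g2 hm2)
  have hle : ((fib H v e).erase h).card ≤ ((t1.erase v) ∪ (t2.erase v)).card :=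
    Finset.card_le_card_of_injOn _ hmaps hinj
  have h5 : (fib H v e).card - 1 ≤ ((fib H v e).erase h).card := Finset.pred_card_le_card_erase
  have hu : ((t1.erase v) ∪ (t2.erase v)).card ≤ 4 := by
    have c1 : (t1.erase v).card = 2 := by
      rw [Finset.card_erase_of_mem hvt1, hUnif t1 ht1]
    have c2 : (t2.erase v).card = 2 := by
      rw [Finset.card_erase_of_mem hvt2, hUnif t2 ht2]
    have := Finset.card_union_le (t1.erase v) (t2.erase v)
    omega
  omega


lemma stepA {H : Finset (Finset V)} {v : V} (hUnif : ∀ e ∈ H, e.card = 3) (hLin : IsLinear H)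
    (hNoC5 : ¬ HasBergeCycle H 5)
    {e : Finset V} (he : e ∈ H) (hve : v ∈ e) (hbig : 6 ≤ (fib H v e).card) :
    ∃ c, c ∈ e ∧ c ≠ v ∧ ∀ h' ∈ fib H v e, c ∈ h' := by
  obtain ⟨a, b, hab, hav, hbv, hetriple⟩ := eq_triple (hUnif e he) hve
  have hae : a ∈ e := by rw [hetriple]; simp
  have hbe : b ∈ e := by rw [hetriple]; simp
  have hmem_ab : ∀ h' ∈ fib H v e, a ∈ h' ∨ b ∈ h' := by
    intro h' hh'
    obtain ⟨hFo', w, hwh, hwe⟩ := mem_fib hh'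
    obtain ⟨-, hvh, -⟩ := mem_Fo hFo'
    rw [hetriple] at hwe
    simp only [Finset.mem_insert, Finset.mem_singleton] at hwe
    rcases hwe with rfl | rfl | rfl
    · exact absurd hwh hvh
    · exact Or.inl hwh
    · exact Or.inr hwh
  by_cases hA : ∀ h' ∈ fib H v e, a ∈ h'
  · exact ⟨a, hae, hav, hA⟩
  by_cases hB : ∀ h' ∈ fib H v e, b ∈ h'
  · exact ⟨b, hbe, hbv, hB⟩
  exfalso
  push_neg at hA hB
  obtain ⟨h2, hh2, ha2⟩ := hA
  obtain ⟨h1, hh1, hb1⟩ := hB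
  have hah1 : a ∈ h1 := (hmem_ab h1 hh1).resolve_right hb1
  have hbh2 : b ∈ h2 := (hmem_ab h2 hh2).resolve_left ha2
  obtain ⟨hFo1, -⟩ := mem_fib hh1
  obtain ⟨hH1, hv1, hc1⟩ := mem_Fo hFo1
  obtain ⟨hFo2, -⟩ := mem_fib hh2
  obtain ⟨hH2, hv2, hc2⟩ := mem_Fo hFo2
  obtain ⟨hx0h, hx0N, hx0a⟩ :=
    secondVtx_spec (v := v) (c := a) (show 1 < (h1 ∩ N1 H v).card by omega)
  set x0 := secondVtx H v a h1 with hx0def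
  obtain ⟨hy0h, hy0N, hy0b⟩ :=
    secondVtx_spec (v := v) (c := b) (show 1 < (h2 ∩ N1 H v).card by omega)
  set y0 := secondVtx H v b h2 with hy0def
  have hx0v : x0 ≠ v := (N1_spec hx0N).1
  have hx0b : x0 ≠ b := fun hxb => hb1 (by rw [← hxb]; exact hx0h)
  have hx0e : x0 ∉ e := by rw [hetriple]; simp [hx0v, hx0a, hx0b]
  have hy0v : y0 ≠ v := (N1_spec hy0N).1
  have hy0a : y0 ≠ a := fun hya => ha2 (by rw [← hya]; exact hy0h)
  have hy0e : y0 ∉ e := by rw [hetriple]; simp [hy0v, hy0a, hy0b]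
  obtain ⟨hPx0H, hPx0v, hPx0x⟩ := partOf_spec hx0N
  obtain ⟨hPy0H, hPy0v, hPy0y⟩ := partOf_spec hy0N
  have hPx0e : partOf H v x0 ≠ e := fun hh => hx0e (by rw [← hh]; exact hPx0x)
  have hPy0e : partOf H v y0 ≠ e := fun hh => hy0e (by rw [← hh]; exact hPy0y)
  have claim1 : ∀ h' ∈ fib H v e, a ∈ h' → ∀ x, x ∈ h' → x ∈ N1 H v → x ≠ a →
      partOf H v x = partOf H v y0 := by
    intro h' hh' hah' x hxh hxN hxa
    by_contra pneq
    obtain ⟨hFo', -⟩ := mem_fib hh'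
    obtain ⟨hH', hv', -⟩ := mem_Fo hFo'
    have hxv : x ≠ v := (N1_spec hxN).1
    have hxb : x ≠ b := by
      rintro rfl
      have heq : h' = e := pair_unique hLin hH' he hab hah' hxh hae hbe
      exact hv' (by rw [heq]; exact hve)
    have hxe' : x ∉ e := by rw [hetriple]; simp [hxv, hxa, hxb]
    obtain ⟨hPxH, hPxv, hPxx⟩ := partOf_spec hxN
    have hxy0 : x ≠ y0 := fun hh => pneq (by rw [hh])
    have hPxe : partOf H v x ≠ e := fun hh => hxe' (by rw [← hh]; exact hPxx)
    exact hNoC5 (berge5 H v x a b y0 (partOf H v x) h' e h2 (partOf H v y0)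
      (Ne.symm hxv) (Ne.symm hav) (Ne.symm hbv) (Ne.symm hy0v)
      hxa hxb hxy0 hab (Ne.symm hy0a) (Ne.symm hy0b)
      (fun hh => hv' (by rw [← hh]; exact hPxv)) hPxe
      (fun hh => hv2 (by rw [← hh]; exact hPxv)) pneq
      (fun hh => hv' (by rw [hh]; exact hve))
      (fun hh => ha2 (by rw [← hh]; exact hah'))
      (fun hh => hv' (by rw [hh]; exact hPy0v))
      (fun hh => hv2 (by rw [← hh]; exact hve))
      (fun hh => hPy0e hh.symm)
      (fun hh => hv2 (by rw [hh]; exact hPy0v))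
      hPxH hH' he hH2 hPy0H
      hPxv hPxx hxh hah' hae hbe hbh2 hy0h hPy0y hPy0v)
  have claim2 : ∀ h' ∈ fib H v e, b ∈ h' → ∀ y, y ∈ h' → y ∈ N1 H v → y ≠ b →
      partOf H v y = partOf H v x0 := by
    intro h' hh' hbh' y hyh hyN hyb
    by_contra pneq
    obtain ⟨hFo', -⟩ := mem_fib hh'
    obtain ⟨hH', hv', -⟩ := mem_Fo hFo'
    have hyv : y ≠ v := (N1_spec hyN).1
    have hya : y ≠ a := by
      rintro rfl
      have heq : h' = e := pair_unique hLin hH' he hab hyh hbh' hae hbe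
      exact hv' (by rw [heq]; exact hve)
    have hye' : y ∉ e := by rw [hetriple]; simp [hyv, hya, hyb]
    obtain ⟨hPyH, hPyv, hPyy⟩ := partOf_spec hyN
    have hyx0 : y ≠ x0 := fun hh => pneq (by rw [hh])
    have hPye : partOf H v y ≠ e := fun hh => hye' (by rw [← hh]; exact hPyy)
    exact hNoC5 (berge5 H v y b a x0 (partOf H v y) h' e h1 (partOf H v x0)
      (Ne.symm hyv) (Ne.symm hbv) (Ne.symm hav) (Ne.symm hx0v)
      hyb hya hyx0 (Ne.symm hab) (Ne.symm hx0b) (Ne.symm hx0a)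
      (fun hh => hv' (by rw [← hh]; exact hPyv)) hPye
      (fun hh => hv1 (by rw [← hh]; exact hPyv)) pneq
      (fun hh => hv' (by rw [hh]; exact hve))
      (fun hh => hb1 (by rw [← hh]; exact hbh'))
      (fun hh => hv' (by rw [hh]; exact hPx0v))
      (fun hh => hv1 (by rw [← hh]; exact hve))
      (fun hh => hPx0e hh.symm)
      (fun hh => hv1 (by rw [hh]; exact hPx0v))
      hPyH hH' he hH1 hPx0H
      hPyv hPyy hyh hbh' hbe hae hah1 hx0h hPx0x hPx0v)
  have hAcard : ((fib H v e).filter fun h' => a ∈ h').card ≤ 2 := by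
    have hmaps : ∀ h' ∈ (fib H v e).filter (fun h' => a ∈ h'),
        secondVtx H v a h' ∈ (partOf H v y0).erase v := by
      intro h' hh'
      obtain ⟨hmemf, hah'⟩ := Finset.mem_filter.mp hh'
      obtain ⟨hFo', -⟩ := mem_fib hmemf
      obtain ⟨-, -, hc'⟩ := mem_Fo hFo'
      obtain ⟨hz1, hz2, hz3⟩ :=
        secondVtx_spec (v := v) (c := a) (show 1 < (h' ∩ N1 H v).card by omega)
      have hcl := claim1 h' hmemf hah' _ hz1 hz2 hz3
      rw [Finset.mem_erase]
      exact ⟨(N1_spec hz2).1, by rw [← hcl]; exact (partOf_spec hz2).2.2⟩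
    have hinj : Set.InjOn (secondVtx H v a) ((fib H v e).filter fun h' => a ∈ h') := by
      intro g1 hg1 g2 hg2 heq
      rw [Finset.mem_coe, Finset.mem_filter] at hg1 hg2
      obtain ⟨hm1, ha1'⟩ := hg1
      obtain ⟨hm2, ha2'⟩ := hg2
      obtain ⟨hFo1', -⟩ := mem_fib hm1
      obtain ⟨hHg1, -, hcg1⟩ := mem_Fo hFo1'
      obtain ⟨hFo2', -⟩ := mem_fib hm2
      obtain ⟨hHg2, -, hcg2⟩ := mem_Fo hFo2'
      obtain ⟨hz1, -, hz3⟩ :=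
        secondVtx_spec (v := v) (c := a) (show 1 < (g1 ∩ N1 H v).card by omega)
      obtain ⟨hw1, -, -⟩ :=
        secondVtx_spec (v := v) (c := a) (show 1 < (g2 ∩ N1 H v).card by omega)
      exact pair_unique hLin hHg1 hHg2 hz3 hz1 ha1' (by rw [heq]; exact hw1) ha2'
    have hcle := Finset.card_le_card_of_injOn _ hmaps hinj
    have h2' : ((partOf H v y0).erase v).card = 2 := by
      rw [Finset.card_erase_of_mem hPy0v, hUnif _ hPy0H]
    omega
  have hBcard : ((fib H v e).filter fun h' => b ∈ h').card ≤ 2 := by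
    have hmaps : ∀ h' ∈ (fib H v e).filter (fun h' => b ∈ h'),
        secondVtx H v b h' ∈ (partOf H v x0).erase v := by
      intro h' hh'
      obtain ⟨hmemf, hbh'⟩ := Finset.mem_filter.mp hh'
      obtain ⟨hFo', -⟩ := mem_fib hmemf
      obtain ⟨-, -, hc'⟩ := mem_Fo hFo'
      obtain ⟨hz1, hz2, hz3⟩ :=
        secondVtx_spec (v := v) (c := b) (show 1 < (h' ∩ N1 H v).card by omega)
      have hcl := claim2 h' hmemf hbh' _ hz1 hz2 hz3
      rw [Finset.mem_erase]
      exact ⟨(N1_spec hz2).1, by rw [← hcl]; exact (partOf_spec hz2).2.2⟩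
    have hinj : Set.InjOn (secondVtx H v b) ((fib H v e).filter fun h' => b ∈ h') := by
      intro g1 hg1 g2 hg2 heq
      rw [Finset.mem_coe, Finset.mem_filter] at hg1 hg2
      obtain ⟨hm1, hb1'⟩ := hg1
      obtain ⟨hm2, hb2'⟩ := hg2
      obtain ⟨hFo1', -⟩ := mem_fib hm1
      obtain ⟨hHg1, -, hcg1⟩ := mem_Fo hFo1'
      obtain ⟨hFo2', -⟩ := mem_fib hm2
      obtain ⟨hHg2, -, hcg2⟩ := mem_Fo hFo2'
      obtain ⟨hz1, -, hz3⟩ :=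
        secondVtx_spec (v := v) (c := b) (show 1 < (g1 ∩ N1 H v).card by omega)
      obtain ⟨hw1, -, -⟩ :=
        secondVtx_spec (v := v) (c := b) (show 1 < (g2 ∩ N1 H v).card by omega)
      exact pair_unique hLin hHg1 hHg2 hz3 hz1 hb1' (by rw [heq]; exact hw1) hb2'
    have hcle := Finset.card_le_card_of_injOn _ hmaps hinj
    have h2' : ((partOf H v x0).erase v).card = 2 := by
      rw [Finset.card_erase_of_mem hPx0v, hUnif _ hPx0H]
    omega
  have hsub : fib H v e ⊆
      ((fib H v e).filter fun h' => a ∈ h') ∪ ((fib H v e).filter fun h' => b ∈ h') := by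
    intro h' hh'
    rcases hmem_ab h' hh' with hmem | hmem
    · exact Finset.mem_union_left _ (Finset.mem_filter.mpr ⟨hh', hmem⟩)
    · exact Finset.mem_union_right _ (Finset.mem_filter.mpr ⟨hh', hmem⟩)
  have hs1 := Finset.card_le_card hsub
  have hs2 := Finset.card_union_le ((fib H v e).filter fun h' => a ∈ h')
    ((fib H v e).filter fun h' => b ∈ h')
  omega


lemma no_two_big {H : Finset (Finset V)} {v : V} (hUnif : ∀ e ∈ H, e.card = 3)
    (hLin : IsLinear H) (hNoC5 : ¬ HasBergeCycle H 5)
    {e1 e2 : Finset V} (he1 : e1 ∈ H) (hv1 : v ∈ e1) (he2 : e2 ∈ H) (hv2 : v ∈ e2)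
    (hne : e1 ≠ e2) (hb1 : 6 ≤ (fib H v e1).card) (hb2 : 6 ≤ (fib H v e2).card)
    {h : Finset V} (hh1 : h ∈ fib H v e1) (hh2 : h ∈ fib H v e2) : False := by
  obtain ⟨c1, hc1e, hc1v, hcen1⟩ := stepA hUnif hLin hNoC5 he1 hv1 hb1
  obtain ⟨c2, hc2e, hc2v, hcen2⟩ := stepA hUnif hLin hNoC5 he2 hv2 hb2
  have hc1h : c1 ∈ h := hcen1 h hh1
  have hc2h : c2 ∈ h := hcen2 h hh2
  obtain ⟨hFoh, -⟩ := mem_fib hh1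
  obtain ⟨hHh, hvh, -⟩ := mem_Fo hFoh
  have hc12 : c1 ≠ c2 := by
    rintro rfl
    exact hne (pair_unique hLin he1 he2 (Ne.symm hc1v) hv1 hc1e hv2 hc2e)
  obtain ⟨g1, hg1mem, hg1ne, x, hxg1, hxN, hxc1, hPx2', -⟩ :=
    stepB hUnif hLin hcen1 hb1 he2 hv2 he2 hv2 h
  obtain ⟨hFog1, -⟩ := mem_fib hg1mem
  obtain ⟨hHg1, hvg1, -⟩ := mem_Fo hFog1
  have hc1g1 : c1 ∈ g1 := hcen1 g1 hg1mem
  have hxe1 : x ∉ e1 := by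
    intro hmem
    have heq : g1 = e1 := pair_unique hLin hHg1 he1 hxc1 hxg1 hc1g1 hmem hc1e
    exact hvg1 (by rw [heq]; exact hv1)
  have hxe2 : x ∉ e2 := not_mem_part hLin hxN he2 hv2 hPx2'
  obtain ⟨hPxH, hPxv, hPxx⟩ := partOf_spec hxN
  obtain ⟨g2, hg2mem, hg2ne, y, hyg2, hyN, hyc2, hPy1', hPy2'⟩ :=
    stepB hUnif hLin hcen2 hb2 he1 hv1 hPxH hPxv h
  obtain ⟨hFog2, -⟩ := mem_fib hg2mem
  obtain ⟨hHg2, hvg2, -⟩ := mem_Fo hFog2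
  have hc2g2 : c2 ∈ g2 := hcen2 g2 hg2mem
  have hye2 : y ∉ e2 := by
    intro hmem
    have heq : g2 = e2 := pair_unique hLin hHg2 he2 hyc2 hyg2 hc2g2 hmem hc2e
    exact hvg2 (by rw [heq]; exact hv2)
  have hye1 : y ∉ e1 := not_mem_part hLin hyN he1 hv1 hPy1'
  obtain ⟨hPyH, hPyv, hPyy⟩ := partOf_spec hyN
  have hxv' : x ≠ v := (N1_spec hxN).1
  have hyv' : y ≠ v := (N1_spec hyN).1
  have hxy : x ≠ y := fun hh => hPy2' (by rw [hh])
  have hxc2 : x ≠ c2 := fun hh => hxe2 (by rw [hh]; exact hc2e)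
  have hyc1 : y ≠ c1 := fun hh => hye1 (by rw [hh]; exact hc1e)
  have hg1g2 : g1 ≠ g2 := by
    intro hh
    have hc2g1 : c2 ∈ g1 := by rw [hh]; exact hc2g2
    exact hg1ne (pair_unique hLin hHg1 hHh hc12 hc1g1 hc2g1 hc1h hc2h)
  exact hNoC5 (berge5 H v x c1 c2 y (partOf H v x) g1 h g2 (partOf H v y)
    (Ne.symm hxv') (Ne.symm hc1v) (Ne.symm hc2v) (Ne.symm hyv')
    hxc1 hxc2 hxy hc12 (Ne.symm hyc1) (Ne.symm hyc2)
    (fun hh => hvg1 (by rw [← hh]; exact hPxv))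
    (fun hh => hvh (by rw [← hh]; exact hPxv))
    (fun hh => hvg2 (by rw [← hh]; exact hPxv))
    (Ne.symm hPy2')
    hg1ne hg1g2
    (fun hh => hvg1 (by rw [hh]; exact hPyv))
    (Ne.symm hg2ne)
    (fun hh => hvh (by rw [hh]; exact hPyv))
    (fun hh => hvg2 (by rw [hh]; exact hPyv))
    hPxH hHg1 hHh hHg2 hPyH
    hPxv hPxx hxg1 hc1g1 hc1h hc2h hc2g2 hyg2 hPyy hPyv)

end Main

theorem stmt_0 {V : Type*} [Fintype V] [DecidableEq V]
    (H : Finset (Finset V))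
    (hUnif : ∀ e ∈ H, e.card = 3)
    (hLin : IsLinear H)
    (hNoC5 : ¬ HasBergeCycle H 5)
    (v : V) :
    (H.filter fun h => 2 ≤ (h ∩ N1 H v).card).card ≤ 6 * hyperDeg H v := by
  classical
  have key : (Fset H v).card ≤ 6 * (H.filter fun e => v ∈ e).card := by
    have hsplit := Finset.card_filter_add_card_filter_not
      (s := Fset H v) (p := fun h => v ∈ h)
    have hFoEq : ((Fset H v).filter fun h => ¬ v ∈ h).card = (Fo H v).card := rfl
    have hFv : ((Fset H v).filter fun h => v ∈ h).card ≤ (H.filter fun e => v ∈ e).card := by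
      apply Finset.card_le_card
      intro h hh
      rw [Finset.mem_filter] at hh ⊢
      exact ⟨(Finset.mem_filter.mp hh.1).1, hh.2⟩
    set small := (H.filter fun e => v ∈ e).filter (fun e => (fib H v e).card < 6) with hsm
    have hcover : Fo H v ⊆ small.biUnion (fun e => fib H v e) := by
      intro h hh
      obtain ⟨hH', hvh, hc2'⟩ := mem_Fo hh
      obtain ⟨x, hx, y, hy, hxy⟩ := Finset.one_lt_card.mp (show 1 < (h ∩ N1 H v).card by omega)
      rw [Finset.mem_inter] at hx hy
      obtain ⟨hxh, hxN⟩ := hx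
      obtain ⟨hyh, hyN⟩ := hy
      obtain ⟨hPxH, hPxv, hPxx⟩ := partOf_spec hxN
      obtain ⟨hPyH, hPyv, hPyy⟩ := partOf_spec hyN
      have hPne : partOf H v x ≠ partOf H v y := by
        intro hpq
        have heq : h = partOf H v x :=
          pair_unique hLin hH' hPxH hxy hxh hyh hPxx (by rw [hpq]; exact hPyy)
        exact hvh (by rw [heq]; exact hPxv)
      have hfx : h ∈ fib H v (partOf H v x) := mem_fib_of hh hxh hPxx
      have hfy : h ∈ fib H v (partOf H v y) := mem_fib_of hh hyh hPyy
      by_cases h6x : (fib H v (partOf H v x)).card < 6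
      · exact Finset.mem_biUnion.mpr ⟨partOf H v x, by
          rw [hsm, Finset.mem_filter, Finset.mem_filter]
          exact ⟨⟨hPxH, hPxv⟩, h6x⟩, hfx⟩
      · by_cases h6y : (fib H v (partOf H v y)).card < 6
        · exact Finset.mem_biUnion.mpr ⟨partOf H v y, by
            rw [hsm, Finset.mem_filter, Finset.mem_filter]
            exact ⟨⟨hPyH, hPyv⟩, h6y⟩, hfy⟩
        · exact (no_two_big hUnif hLin hNoC5 hPxH hPxv hPyH hPyv hPne
            (by omega) (by omega) hfx hfy).elim
    have h1 : (Fo H v).card ≤ (small.biUnion (fun e => fib H v e)).card :=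
      Finset.card_le_card hcover
    have h2 : (small.biUnion fun e => fib H v e).card ≤ ∑ e ∈ small, (fib H v e).card :=
      Finset.card_biUnion_le
    have h3 : ∑ e ∈ small, (fib H v e).card ≤ small.card * 5 := by
      have := Finset.sum_le_card_nsmul small (fun e => (fib H v e).card) 5 (by
        intro e hesm
        rw [hsm, Finset.mem_filter] at hesm
        show (fib H v e).card ≤ 5
        omega)
      simpa [smul_eq_mul] using this
    have h4 : small.card ≤ (H.filter fun e => v ∈ e).card :=
      Finset.card_le_card (Finset.filter_subset _ _)
    omega
  exact key
end

section
/- Let H be a 3-uniform linear hypergraph containing no Berge cycle of length 5 and let v be a vertex of H. Then |N₂(v)| ≥ (∑_{x ∈ N₁(v)} d(x)) − 18·d(v), where N₁(v) is the first neighborhood of v and N₂(v) is the second neighborhood of v. -/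
open Finset

/-- Second neighborhood: vertices outside `N1 H v ∪ {v}` lying in a hyperedge
that meets `N1 H v`. -/
def N2 {V : Type*} [DecidableEq V] (H : Finset (Finset V)) (v : V) : Finset V :=
  ((H.filter fun e => (e ∩ N1 H v).Nonempty).biUnion id) \ insert v (N1 H v)

private lemma cases5 : ∀ i : ZMod 5, i = 0 ∨ i = 1 ∨ i = 2 ∨ i = 3 ∨ i = 4 := by decide

private lemma inj5 {α : Type*} (f : ZMod 5 → α)
    (h01 : f 0 ≠ f 1) (h02 : f 0 ≠ f 2) (h03 : f 0 ≠ f 3) (h04 : f 0 ≠ f 4)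
    (h12 : f 1 ≠ f 2) (h13 : f 1 ≠ f 3) (h14 : f 1 ≠ f 4)
    (h23 : f 2 ≠ f 3) (h24 : f 2 ≠ f 4) (h34 : f 3 ≠ f 4) : Function.Injective f := by
  intro i j hij
  rcases cases5 i with rfl|rfl|rfl|rfl|rfl <;> rcases cases5 j with rfl|rfl|rfl|rfl|rfl <;>
    first
      | rfl
      | exact absurd hij (by assumption)
      | exact absurd hij.symm (by assumption)

private lemma cyc5 {V : Type*} {H : Finset (Finset V)} (w : ZMod 5 → V) (E : ZMod 5 → Finset V)
    (hH0 : E 0 ∈ H) (hH1 : E 1 ∈ H) (hH2 : E 2 ∈ H) (hH3 : E 3 ∈ H) (hH4 : E 4 ∈ H)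
    (p0 : w 0 ∈ E 0) (q0 : w 1 ∈ E 0) (p1 : w 1 ∈ E 1) (q1 : w 2 ∈ E 1)
    (p2 : w 2 ∈ E 2) (q2 : w 3 ∈ E 2) (p3 : w 3 ∈ E 3) (q3 : w 4 ∈ E 3)
    (p4 : w 4 ∈ E 4) (q4 : w 0 ∈ E 4) :
    ∀ i, E i ∈ H ∧ w i ∈ E i ∧ w (i + 1) ∈ E i := by
  intro i
  rcases cases5 i with rfl|rfl|rfl|rfl|rfl
  · rw [show (0:ZMod 5)+1 = 1 from by decide]; exact ⟨hH0, p0, q0⟩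
  · rw [show (1:ZMod 5)+1 = 2 from by decide]; exact ⟨hH1, p1, q1⟩
  · rw [show (2:ZMod 5)+1 = 3 from by decide]; exact ⟨hH2, p2, q2⟩
  · rw [show (3:ZMod 5)+1 = 4 from by decide]; exact ⟨hH3, p3, q3⟩
  · rw [show (4:ZMod 5)+1 = 0 from by decide]; exact ⟨hH4, p4, q4⟩

lemma mk_c5 {V : Type*} {H : Finset (Finset V)} (hNoC5 : ¬ HasBergeCycle H 5)
    {a₀ a₁ a₂ a₃ a₄ : V} {E₀ E₁ E₂ E₃ E₄ : Finset V}
    (hE₀ : E₀ ∈ H) (hE₁ : E₁ ∈ H) (hE₂ : E₂ ∈ H) (hE₃ : E₃ ∈ H) (hE₄ : E₄ ∈ H)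
    (v01 : a₀ ≠ a₁) (v02 : a₀ ≠ a₂) (v03 : a₀ ≠ a₃) (v04 : a₀ ≠ a₄)
    (v12 : a₁ ≠ a₂) (v13 : a₁ ≠ a₃) (v14 : a₁ ≠ a₄)
    (v23 : a₂ ≠ a₃) (v24 : a₂ ≠ a₄) (v34 : a₃ ≠ a₄)
    (e01 : E₀ ≠ E₁) (e02 : E₀ ≠ E₂) (e03 : E₀ ≠ E₃) (e04 : E₀ ≠ E₄)
    (e12 : E₁ ≠ E₂) (e13 : E₁ ≠ E₃) (e14 : E₁ ≠ E₄)
    (e23 : E₂ ≠ E₃) (e24 : E₂ ≠ E₄) (e34 : E₃ ≠ E₄)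
    (m00 : a₀ ∈ E₀) (m10 : a₁ ∈ E₀)
    (m11 : a₁ ∈ E₁) (m21 : a₂ ∈ E₁)
    (m22 : a₂ ∈ E₂) (m32 : a₃ ∈ E₂)
    (m33 : a₃ ∈ E₃) (m43 : a₄ ∈ E₃)
    (m44 : a₄ ∈ E₄) (m04 : a₀ ∈ E₄) : False := by
  classical
  apply hNoC5
  set w : ZMod 5 → V := fun i => if i = 0 then a₀ else if i = 1 then a₁ else if i = 2 then a₂ else if i = 3 then a₃ else a₄ with hw
  set E : ZMod 5 → Finset V := fun i => if i = 0 then E₀ else if i = 1 then E₁ else if i = 2 then E₂ else if i = 3 then E₃ else E₄ with hE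
  have w0 : w 0 = a₀ := by
    show (if (0:ZMod 5) = 0 then a₀ else _) = a₀; rw [if_pos rfl]
  have w1 : w 1 = a₁ := by
    show (if (1:ZMod 5) = 0 then a₀ else if (1:ZMod 5) = 1 then a₁ else _) = a₁
    rw [if_neg (by decide), if_pos rfl]
  have w2 : w 2 = a₂ := by
    show (if (2:ZMod 5) = 0 then a₀ else if (2:ZMod 5) = 1 then a₁ else if (2:ZMod 5) = 2 then a₂ else _) = a₂
    rw [if_neg (by decide), if_neg (by decide), if_pos rfl]
  have w3 : w 3 = a₃ := by
    show (if (3:ZMod 5) = 0 then a₀ else if (3:ZMod 5) = 1 then a₁ else if (3:ZMod 5) = 2 then a₂ else if (3:ZMod 5) = 3 then a₃ else a₄) = a₃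
    rw [if_neg (by decide), if_neg (by decide), if_neg (by decide), if_pos rfl]
  have w4 : w 4 = a₄ := by
    show (if (4:ZMod 5) = 0 then a₀ else if (4:ZMod 5) = 1 then a₁ else if (4:ZMod 5) = 2 then a₂ else if (4:ZMod 5) = 3 then a₃ else a₄) = a₄
    rw [if_neg (by decide), if_neg (by decide), if_neg (by decide), if_neg (by decide)]
  have F0 : E 0 = E₀ := by
    show (if (0:ZMod 5) = 0 then E₀ else _) = E₀; rw [if_pos rfl]
  have F1 : E 1 = E₁ := by
    show (if (1:ZMod 5) = 0 then E₀ else if (1:ZMod 5) = 1 then E₁ else _) = E₁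
    rw [if_neg (by decide), if_pos rfl]
  have F2 : E 2 = E₂ := by
    show (if (2:ZMod 5) = 0 then E₀ else if (2:ZMod 5) = 1 then E₁ else if (2:ZMod 5) = 2 then E₂ else _) = E₂
    rw [if_neg (by decide), if_neg (by decide), if_pos rfl]
  have F3 : E 3 = E₃ := by
    show (if (3:ZMod 5) = 0 then E₀ else if (3:ZMod 5) = 1 then E₁ else if (3:ZMod 5) = 2 then E₂ else if (3:ZMod 5) = 3 then E₃ else E₄) = E₃
    rw [if_neg (by decide), if_neg (by decide), if_neg (by decide), if_pos rfl]
  have F4 : E 4 = E₄ := by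
    show (if (4:ZMod 5) = 0 then E₀ else if (4:ZMod 5) = 1 then E₁ else if (4:ZMod 5) = 2 then E₂ else if (4:ZMod 5) = 3 then E₃ else E₄) = E₄
    rw [if_neg (by decide), if_neg (by decide), if_neg (by decide), if_neg (by decide)]
  refine ⟨w, E, ?_, ?_, ?_⟩
  · exact inj5 w (by rw [w0, w1]; exact v01) (by rw [w0, w2]; exact v02) (by rw [w0, w3]; exact v03)
      (by rw [w0, w4]; exact v04) (by rw [w1, w2]; exact v12) (by rw [w1, w3]; exact v13)
      (by rw [w1, w4]; exact v14) (by rw [w2, w3]; exact v23) (by rw [w2, w4]; exact v24)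
      (by rw [w3, w4]; exact v34)
  · exact inj5 E (by rw [F0, F1]; exact e01) (by rw [F0, F2]; exact e02) (by rw [F0, F3]; exact e03)
      (by rw [F0, F4]; exact e04) (by rw [F1, F2]; exact e12) (by rw [F1, F3]; exact e13)
      (by rw [F1, F4]; exact e14) (by rw [F2, F3]; exact e23) (by rw [F2, F4]; exact e24)
      (by rw [F3, F4]; exact e34)
  · exact cyc5 w E
      (by rw [F0]; exact hE₀) (by rw [F1]; exact hE₁) (by rw [F2]; exact hE₂)
      (by rw [F3]; exact hE₃) (by rw [F4]; exact hE₄)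
      (by rw [w0, F0]; exact m00) (by rw [w1, F0]; exact m10)
      (by rw [w1, F1]; exact m11) (by rw [w2, F1]; exact m21)
      (by rw [w2, F2]; exact m22) (by rw [w3, F2]; exact m32)
      (by rw [w3, F3]; exact m33) (by rw [w4, F3]; exact m43)
      (by rw [w4, F4]; exact m44) (by rw [w0, F4]; exact m04)

section Basics
variable {V : Type*} [DecidableEq V] {H : Finset (Finset V)} {v : V}

lemma lin2 (hLin : IsLinear H) {e f : Finset V} {a b : V}
    (he : e ∈ H) (hf : f ∈ H) (hab : a ≠ b)
    (hae : a ∈ e) (hbe : b ∈ e) (haf : a ∈ f) (hbf : b ∈ f) : e = f := by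
  by_contra hef
  have h1 := hLin e he f hf hef
  have h2 : ({a, b} : Finset V) ⊆ e ∩ f := by
    intro x hx
    rcases mem_insert.mp hx with rfl | hx
    · exact mem_inter.mpr ⟨hae, haf⟩
    · rcases mem_singleton.mp hx with rfl
      exact mem_inter.mpr ⟨hbe, hbf⟩
  have h3 := card_le_card h2
  rw [card_pair hab] at h3
  omega

lemma mem_N1_iff {x : V} : x ∈ N1 H v ↔ x ≠ v ∧ ∃ e ∈ H, v ∈ e ∧ x ∈ e := by
  constructor
  · intro hx
    obtain ⟨hne, hmem⟩ := mem_erase.mp hx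
    obtain ⟨e, he, hxe⟩ := mem_biUnion.mp hmem
    obtain ⟨heH, hve⟩ := mem_filter.mp he
    exact ⟨hne, e, heH, hve, hxe⟩
  · rintro ⟨hne, e, heH, hve, hxe⟩
    exact mem_erase.mpr ⟨hne, mem_biUnion.mpr ⟨e, mem_filter.mpr ⟨heH, hve⟩, hxe⟩⟩

lemma N1_ne_v {x : V} (hx : x ∈ N1 H v) : x ≠ v := (mem_N1_iff.mp hx).1

lemma N2_ne_v {u : V} (hu : u ∈ N2 H v) : u ≠ v := by
  have := (mem_sdiff.mp hu).2
  intro h; exact this (mem_insert.mpr (Or.inl h))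

lemma N2_not_N1 {u : V} (hu : u ∈ N2 H v) : u ∉ N1 H v := by
  have := (mem_sdiff.mp hu).2
  intro h; exact this (mem_insert.mpr (Or.inr h))

lemma N1_ne_N2 {x u : V} (hx : x ∈ N1 H v) (hu : u ∈ N2 H v) : x ≠ u :=
  fun h => N2_not_N1 hu (h ▸ hx)

lemma mem_N2_of {e : Finset V} {u : V} (he : e ∈ H) (hne : (e ∩ N1 H v).Nonempty)
    (hu : u ∈ e) (h1 : u ∉ N1 H v) (h2 : u ≠ v) : u ∈ N2 H v := by
  refine mem_sdiff.mpr ⟨mem_biUnion.mpr ⟨e, mem_filter.mpr ⟨he, hne⟩, hu⟩, ?_⟩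
  intro h
  rcases mem_insert.mp h with h | h
  · exact h2 h
  · exact h1 h

noncomputable def vEdge (H : Finset (Finset V)) (v x : V) : Finset V :=
  if h : ∃ e, e ∈ H ∧ v ∈ e ∧ x ∈ e then h.choose else ∅

lemma vEdge_spec {x : V} (hx : x ∈ N1 H v) :
    vEdge H v x ∈ H ∧ v ∈ vEdge H v x ∧ x ∈ vEdge H v x := by
  obtain ⟨-, e, he, hv, hxe⟩ := mem_N1_iff.mp hx
  have h : ∃ e, e ∈ H ∧ v ∈ e ∧ x ∈ e := ⟨e, he, hv, hxe⟩
  rw [vEdge, dif_pos h]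
  exact h.choose_spec

lemma vEdge_mem {x : V} (hx : x ∈ N1 H v) : vEdge H v x ∈ H := (vEdge_spec hx).1
lemma v_mem_vEdge {x : V} (hx : x ∈ N1 H v) : v ∈ vEdge H v x := (vEdge_spec hx).2.1
lemma mem_vEdge {x : V} (hx : x ∈ N1 H v) : x ∈ vEdge H v x := (vEdge_spec hx).2.2

lemma vEdge_eq (hLin : IsLinear H) {x : V} {e : Finset V} (hx : x ∈ N1 H v)
    (he : e ∈ H) (hv : v ∈ e) (hxe : x ∈ e) : vEdge H v x = e :=
  lin2 hLin (vEdge_mem hx) he (Ne.symm (N1_ne_v hx)) (v_mem_vEdge hx) (mem_vEdge hx) hv hxe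

lemma vEdge_inj (hLin : IsLinear H) {x y : V} (hx : x ∈ N1 H v) (hy : y ∈ N1 H v)
    (h : x = y) : vEdge H v x = vEdge H v y := by rw [h]

/-- Two distinct `N1`-vertices lying in a common hyperedge avoiding `v` have distinct classes. -/
lemma class_ne (hLin : IsLinear H) {e : Finset V} {x y : V} (he : e ∈ H) (hv : v ∉ e)
    (hx : x ∈ e) (hy : y ∈ e) (hxN : x ∈ N1 H v) (hyN : y ∈ N1 H v) (hxy : x ≠ y) :
    vEdge H v x ≠ vEdge H v y := by
  intro hEq
  have hy' : y ∈ vEdge H v x := hEq ▸ mem_vEdge hyN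
  have h2 : vEdge H v x = e := lin2 hLin (vEdge_mem hxN) he hxy (mem_vEdge hxN) hy' hx hy
  exact hv (h2 ▸ v_mem_vEdge hxN)

lemma vEdge_ne_of_not_mem {x : V} {e : Finset V} (hx : x ∈ N1 H v) (hv : v ∉ e) :
    vEdge H v x ≠ e := fun h => hv (h ▸ v_mem_vEdge hx)

lemma card_N1_le (hUnif : ∀ e ∈ H, e.card = 3) : (N1 H v).card ≤ 2 * hyperDeg H v := by
  have hsub : N1 H v ⊆ (H.filter fun e => v ∈ e).biUnion (fun e => e.erase v) := by
    intro x hx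
    obtain ⟨hne, e, he, hve, hxe⟩ := mem_N1_iff.mp hx
    exact mem_biUnion.mpr ⟨e, mem_filter.mpr ⟨he, hve⟩, mem_erase.mpr ⟨hne, hxe⟩⟩
  calc (N1 H v).card ≤ ((H.filter fun e => v ∈ e).biUnion (fun e => e.erase v)).card :=
        card_le_card hsub
    _ ≤ ∑ e ∈ H.filter (fun e => v ∈ e), (e.erase v).card := card_biUnion_le
    _ ≤ ∑ _e ∈ H.filter (fun e => v ∈ e), 2 := by
        apply sum_le_sum
        intro e he
        obtain ⟨heH, hve⟩ := mem_filter.mp he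
        rw [card_erase_of_mem hve, hUnif e heH]
    _ = 2 * hyperDeg H v := by rw [sum_const, smul_eq_mul, hyperDeg, mul_comm]

lemma doublecount (A : Finset V) (B : Finset (Finset V)) :
    ∑ w ∈ A, (B.filter fun e => w ∈ e).card = ∑ e ∈ B, (A.filter fun w => w ∈ e).card := by
  simp only [card_filter]
  exact Finset.sum_comm

end Basics

section LemA
variable {V : Type*} [DecidableEq V] {H : Finset (Finset V)} {v : V}

/-- Type-1 edges: not containing `v`, exactly one vertex in `N1`. -/
def T1 (H : Finset (Finset V)) (v : V) : Finset (Finset V) :=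
  H.filter fun e => v ∉ e ∧ (e ∩ N1 H v).card = 1

noncomputable def xT1 (H : Finset (Finset V)) (v : V) (e : Finset V) : V :=
  if h : (e ∩ N1 H v).card = 1 then (Finset.card_eq_one.mp h).choose else v

lemma T1_memH {e : Finset V} (he : e ∈ T1 H v) : e ∈ H := (mem_filter.mp he).1
lemma T1_nv {e : Finset V} (he : e ∈ T1 H v) : v ∉ e := (mem_filter.mp he).2.1
lemma T1_card1 {e : Finset V} (he : e ∈ T1 H v) : (e ∩ N1 H v).card = 1 :=
  (mem_filter.mp he).2.2

lemma xT1_spec {e : Finset V} (he : e ∈ T1 H v) : e ∩ N1 H v = {xT1 H v e} := by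
  rw [xT1, dif_pos (T1_card1 he)]
  exact (Finset.card_eq_one.mp (T1_card1 he)).choose_spec

lemma xT1_mem_inter {e : Finset V} (he : e ∈ T1 H v) : xT1 H v e ∈ e ∩ N1 H v := by
  rw [xT1_spec he]; exact mem_singleton_self _

lemma xT1_mem {e : Finset V} (he : e ∈ T1 H v) : xT1 H v e ∈ e :=
  (mem_inter.mp (xT1_mem_inter he)).1

lemma xT1_N1 {e : Finset V} (he : e ∈ T1 H v) : xT1 H v e ∈ N1 H v :=
  (mem_inter.mp (xT1_mem_inter he)).2

lemma T1_mem_N2 {e : Finset V} {u : V} (he : e ∈ T1 H v) (hu : u ∈ e)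
    (hne : u ≠ xT1 H v e) : u ∈ N2 H v := by
  refine mem_N2_of (T1_memH he) ⟨_, xT1_mem_inter he⟩ hu ?_ ?_
  · intro hN1
    exact hne (by
      have : u ∈ e ∩ N1 H v := mem_inter.mpr ⟨hu, hN1⟩
      rw [xT1_spec he] at this
      exact mem_singleton.mp this)
  · intro h; exact T1_nv he (h ▸ hu)

lemma T1_interN2 (hUnif : ∀ e ∈ H, e.card = 3) {e : Finset V} (he : e ∈ T1 H v) :
    e ∩ N2 H v = e.erase (xT1 H v e) := by
  ext u
  simp only [mem_inter, mem_erase]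
  constructor
  · rintro ⟨hu, hN2⟩
    exact ⟨fun h => N2_not_N1 hN2 (h ▸ xT1_N1 he), hu⟩
  · rintro ⟨hnex, hu⟩
    exact ⟨hu, T1_mem_N2 he hu hnex⟩

lemma T1_pair_card (hUnif : ∀ e ∈ H, e.card = 3) {e : Finset V} (he : e ∈ T1 H v) :
    (e ∩ N2 H v).card = 2 := by
  rw [T1_interN2 hUnif he, card_erase_of_mem (xT1_mem he), hUnif e (T1_memH he)]

/-- KEY: two type-1 edges hanging at the two endpoints of a third must have equal class. -/
lemma key_A2 (hLin : IsLinear H) (hNoC5 : ¬ HasBergeCycle H 5)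
    {e f g : Finset V} {u₁ u₂ : V}
    (he : e ∈ T1 H v) (hf : f ∈ T1 H v) (hg : g ∈ T1 H v)
    (hu12 : u₁ ≠ u₂) (hu1N : u₁ ∈ N2 H v) (hu2N : u₂ ∈ N2 H v)
    (h1e : u₁ ∈ e) (h1f : u₁ ∈ f) (h2f : u₂ ∈ f) (h2g : u₂ ∈ g)
    (hef : e ≠ f) (hgf : g ≠ f) :
    vEdge H v (xT1 H v e) = vEdge H v (xT1 H v g) := by
  by_contra hne
  have hxe := xT1_N1 he
  have hxg := xT1_N1 hg
  have hxexg : xT1 H v e ≠ xT1 H v g := fun h => hne (by rw [h])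
  have heg : e ≠ g := by
    intro h
    exact hef (lin2 hLin (T1_memH he) (T1_memH hf) hu12 h1e (h ▸ h2g) h1f h2f)
  exact mk_c5 hNoC5 (vEdge_mem hxe) (T1_memH he) (T1_memH hf) (T1_memH hg) (vEdge_mem hxg)
    -- vertices: v, xT1 e, u₁, u₂, xT1 g
    (Ne.symm (N1_ne_v hxe)) (Ne.symm (N2_ne_v hu1N)) (Ne.symm (N2_ne_v hu2N)) (Ne.symm (N1_ne_v hxg))
    (N1_ne_N2 hxe hu1N) (N1_ne_N2 hxe hu2N) hxexg
    hu12 (Ne.symm (N1_ne_N2 hxg hu1N)) (Ne.symm (N1_ne_N2 hxg hu2N))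
    -- edges: vEdge xe, e, f, g, vEdge xg
    (vEdge_ne_of_not_mem hxe (T1_nv he)) (vEdge_ne_of_not_mem hxe (T1_nv hf))
    (vEdge_ne_of_not_mem hxe (T1_nv hg)) hne
    hef heg (fun h => (vEdge_ne_of_not_mem hxg (T1_nv he)) h.symm)
    (Ne.symm hgf) (fun h => (vEdge_ne_of_not_mem hxg (T1_nv hf)) h.symm)
    (fun h => (vEdge_ne_of_not_mem hxg (T1_nv hg)) h.symm)
    -- memberships
    (v_mem_vEdge hxe) (mem_vEdge hxe)
    (xT1_mem he) h1e
    h1f h2f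
    h2g (xT1_mem hg)
    (mem_vEdge hxg) (v_mem_vEdge hxg)

lemma three_same_class (hUnif : ∀ e ∈ H, e.card = 3) (hLin : IsLinear H)
    {u : V} (huN2 : u ∈ N2 H v) {f₁ f₂ f₃ : Finset V}
    (h1 : f₁ ∈ T1 H v) (h2 : f₂ ∈ T1 H v) (h3 : f₃ ∈ T1 H v)
    (d12 : f₁ ≠ f₂) (d13 : f₁ ≠ f₃) (d23 : f₂ ≠ f₃)
    (m1 : u ∈ f₁) (m2 : u ∈ f₂) (m3 : u ∈ f₃)
    (c12 : vEdge H v (xT1 H v f₁) = vEdge H v (xT1 H v f₂))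
    (c13 : vEdge H v (xT1 H v f₁) = vEdge H v (xT1 H v f₃)) : False := by
  set x₁ := xT1 H v f₁
  set x₂ := xT1 H v f₂
  set x₃ := xT1 H v f₃
  have hx1 := xT1_N1 h1
  have hx2 := xT1_N1 h2
  have hx3 := xT1_N1 h3
  have hne : ∀ {a b : Finset V}, a ∈ T1 H v → b ∈ T1 H v → a ≠ b → u ∈ a → u ∈ b →
      xT1 H v a ≠ xT1 H v b := by
    intro a b ha hb hab hua hub hEq
    exact hab (lin2 hLin (T1_memH ha) (T1_memH hb) (N1_ne_N2 (xT1_N1 ha) huN2)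
      (xT1_mem ha) hua (hEq ▸ xT1_mem hb) hub)
  have n12 : x₁ ≠ x₂ := hne h1 h2 d12 m1 m2
  have n13 : x₁ ≠ x₃ := hne h1 h3 d13 m1 m3
  have n23 : x₂ ≠ x₃ := hne h2 h3 d23 m2 m3
  have sub : ({x₁, x₂, x₃} : Finset V) ⊆ (vEdge H v x₁).erase v := by
    intro z hz
    simp only [mem_insert, mem_singleton] at hz
    rcases hz with rfl | rfl | rfl
    · exact mem_erase.mpr ⟨N1_ne_v hx1, mem_vEdge hx1⟩
    · exact mem_erase.mpr ⟨N1_ne_v hx2, c12 ▸ mem_vEdge hx2⟩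
    · exact mem_erase.mpr ⟨N1_ne_v hx3, c13 ▸ mem_vEdge hx3⟩
  have hc3 : ({x₁, x₂, x₃} : Finset V).card = 3 := by
    rw [card_insert_of_notMem (by simp [n12, n13]),
        card_insert_of_notMem (by simp [n23]), card_singleton]
  have hc2 : ((vEdge H v x₁).erase v).card = 2 := by
    rw [card_erase_of_mem (v_mem_vEdge hx1), hUnif _ (vEdge_mem hx1)]
  have := card_le_card sub
  omega

end LemA

section LemA2
variable {V : Type*} [DecidableEq V] {H : Finset (Finset V)} {v : V}

/-- Degree of a vertex in the type-1 edge system. -/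
def dg1 (H : Finset (Finset V)) (v u : V) : ℕ := ((T1 H v).filter fun e => u ∈ e).card

lemma exists_three {α : Type*} [DecidableEq α] {s : Finset α} (h : 3 ≤ s.card) :
    ∃ a b c, a ∈ s ∧ b ∈ s ∧ c ∈ s ∧ a ≠ b ∧ a ≠ c ∧ b ≠ c := by
  obtain ⟨a, ha⟩ := card_pos.mp (show 0 < s.card by omega)
  have h2 : 2 ≤ (s.erase a).card := by rw [card_erase_of_mem ha]; omega
  obtain ⟨b, hb⟩ := card_pos.mp (show 0 < (s.erase a).card by omega)
  have h1 : 1 ≤ ((s.erase a).erase b).card := by rw [card_erase_of_mem hb]; omega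
  obtain ⟨c, hc⟩ := card_pos.mp (show 0 < ((s.erase a).erase b).card by omega)
  refine ⟨a, b, c, ha, mem_of_mem_erase hb, mem_of_mem_erase (mem_of_mem_erase hc), ?_, ?_, ?_⟩
  · exact fun h => (mem_erase.mp hb).1 h.symm
  · exact fun h => (mem_erase.mp (mem_of_mem_erase hc)).1 h.symm
  · exact fun h => (mem_erase.mp hc).1 h.symm

/-- Every `N2`-vertex lies in at most two "core" type-1 edges. -/
lemma core_deg_le_two (hUnif : ∀ e ∈ H, e.card = 3) (hLin : IsLinear H)
    (hNoC5 : ¬ HasBergeCycle H 5) {u : V} (hu : u ∈ N2 H v) :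
    (((T1 H v).filter fun e => ∀ u' ∈ e ∩ N2 H v, 2 ≤ dg1 H v u').filter
        fun e => u ∈ e).card ≤ 2 := by
  set S := ((T1 H v).filter fun e => ∀ u' ∈ e ∩ N2 H v, 2 ≤ dg1 H v u').filter
      (fun e => u ∈ e) with hS
  by_contra hcon
  push_neg at hcon
  obtain ⟨f₁, f₂, f₃, hf₁, hf₂, hf₃, d12, d13, d23⟩ := exists_three (show 3 ≤ S.card by omega)
  -- unpack membership
  have unpack : ∀ {f : Finset V},
      f ∈ S →
      f ∈ T1 H v ∧ (∀ u' ∈ f ∩ N2 H v, 2 ≤ dg1 H v u') ∧ u ∈ f := by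
    intro f hf
    rw [hS] at hf
    obtain ⟨hf', hu'⟩ := mem_filter.mp hf
    obtain ⟨hT, hcore⟩ := mem_filter.mp hf'
    exact ⟨hT, hcore, hu'⟩
  obtain ⟨hT1, hcore1, hu1⟩ := unpack hf₁
  obtain ⟨hT2, hcore2, hu2⟩ := unpack hf₂
  obtain ⟨hT3, hcore3, hu3⟩ := unpack hf₃
  -- the other endpoint of f i and a second edge there
  have other : ∀ {f : Finset V}, f ∈ T1 H v → (∀ u' ∈ f ∩ N2 H v, 2 ≤ dg1 H v u') → u ∈ f →
      ∃ w g, w ∈ N2 H v ∧ w ≠ u ∧ w ∈ f ∧ g ∈ T1 H v ∧ w ∈ g ∧ g ≠ f := by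
    intro f hf hcore huf
    have hpair : (f ∩ N2 H v).card = 2 := T1_pair_card hUnif hf
    have huI : u ∈ f ∩ N2 H v := mem_inter.mpr ⟨huf, hu⟩
    have : 0 < ((f ∩ N2 H v).erase u).card := by rw [card_erase_of_mem huI]; omega
    obtain ⟨w, hw⟩ := card_pos.mp this
    have hwI := mem_of_mem_erase hw
    have hwu : w ≠ u := (mem_erase.mp hw).1
    have hdg : 2 ≤ dg1 H v w := hcore w hwI
    have : 1 < ((T1 H v).filter fun e => w ∈ e).card := hdg
    obtain ⟨g, hg, hgf⟩ := exists_mem_ne this f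
    obtain ⟨hgT, hwg⟩ := mem_filter.mp hg
    exact ⟨w, g, (mem_inter.mp hwI).2, hwu, (mem_inter.mp hwI).1, hgT, hwg, hgf⟩
  obtain ⟨w₁, g₁, hw₁N, hw₁u, hw₁f, hg₁T, hw₁g, hg₁f⟩ := other hT1 hcore1 hu1
  obtain ⟨w₂, g₂, hw₂N, hw₂u, hw₂f, hg₂T, hw₂g, hg₂f⟩ := other hT2 hcore2 hu2
  -- key applications; f := f₁ with hanging e ∈ {f₂, f₃}, g := g₁
  have c21 : vEdge H v (xT1 H v f₂) = vEdge H v (xT1 H v g₁) :=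
    key_A2 hLin hNoC5 hT2 hT1 hg₁T (Ne.symm hw₁u) hu hw₁N hu2 hu1 hw₁f hw₁g d12.symm hg₁f
  have c31 : vEdge H v (xT1 H v f₃) = vEdge H v (xT1 H v g₁) :=
    key_A2 hLin hNoC5 hT3 hT1 hg₁T (Ne.symm hw₁u) hu hw₁N hu3 hu1 hw₁f hw₁g d13.symm hg₁f
  have c12 : vEdge H v (xT1 H v f₁) = vEdge H v (xT1 H v g₂) :=
    key_A2 hLin hNoC5 hT1 hT2 hg₂T (Ne.symm hw₂u) hu hw₂N hu1 hu2 hw₂f hw₂g d12 hg₂f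
  have c32 : vEdge H v (xT1 H v f₃) = vEdge H v (xT1 H v g₂) :=
    key_A2 hLin hNoC5 hT3 hT2 hg₂T (Ne.symm hw₂u) hu hw₂N hu3 hu2 hw₂f hw₂g d23.symm hg₂f
  exact three_same_class hUnif hLin hu hT1 hT2 hT3 d12 d13 d23 hu1 hu2 hu3
    (by rw [c12, ← c32, c31, ← c21]) (by rw [c12, ← c32])

/-- The number of type-1 edges is at most `|N2|`. -/
lemma card_T1_le (hUnif : ∀ e ∈ H, e.card = 3) (hLin : IsLinear H)
    (hNoC5 : ¬ HasBergeCycle H 5) : (T1 H v).card ≤ (N2 H v).card := by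
  classical
  set P : Finset V := (N2 H v).filter (fun u => dg1 H v u = 1) with hP
  set C : Finset V := (N2 H v).filter (fun u => 2 ≤ dg1 H v u) with hC
  set pend : Finset V → Prop := fun e => ∃ u' ∈ e ∩ N2 H v, dg1 H v u' ≤ 1 with hpend
  have hsplit : ((T1 H v).filter pend).card + ((T1 H v).filter fun e => ¬ pend e).card
      = (T1 H v).card := card_filter_add_card_filter_not _
  -- pendant edges inject into P
  have h1 : ((T1 H v).filter pend).card ≤ P.card := by
    have hwit : ∀ e ∈ (T1 H v).filter pend,
        (if h : ∃ u' ∈ e ∩ N2 H v, dg1 H v u' ≤ 1 then h.choose else v) ∈ P ∧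
        (if h : ∃ u' ∈ e ∩ N2 H v, dg1 H v u' ≤ 1 then h.choose else v) ∈ e := by
      intro e he
      obtain ⟨heT, hex⟩ := mem_filter.mp he
      rw [dif_pos hex]
      obtain ⟨hmem, hle⟩ := hex.choose_spec
      have hue : hex.choose ∈ e := (mem_inter.mp hmem).1
      have huN : hex.choose ∈ N2 H v := (mem_inter.mp hmem).2
      have : 1 ≤ dg1 H v hex.choose :=
        card_pos.mpr ⟨e, mem_filter.mpr ⟨heT, hue⟩⟩
      exact ⟨mem_filter.mpr ⟨huN, by omega⟩, hue⟩
    apply card_le_card_of_injOn (fun e => if h : ∃ u' ∈ e ∩ N2 H v, dg1 H v u' ≤ 1 then h.choose else v)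
    · intro e he; exact (hwit e he).1
    · intro e he e' he' hEq
      dsimp only at hEq
      have h1 := hwit e he
      have h2 := hwit e' he'
      rw [← hEq] at h2
      have hu1 : dg1 H v (if h : ∃ u' ∈ e ∩ N2 H v, dg1 H v u' ≤ 1 then h.choose else v) = 1 :=
        (mem_filter.mp h1.1).2
      have hdg : ((T1 H v).filter fun e'' =>
          (if h : ∃ u' ∈ e ∩ N2 H v, dg1 H v u' ≤ 1 then h.choose else v) ∈ e'').card ≤ 1 :=
        le_of_eq hu1
      exact card_le_one.mp hdg _ (mem_filter.mpr ⟨mem_of_mem_filter _ he, h1.2⟩) _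
        (mem_filter.mpr ⟨mem_of_mem_filter _ he', h2.2⟩)
  -- core edges: handshake
  have h2 : 2 * ((T1 H v).filter fun e => ¬ pend e).card ≤ 2 * C.card := by
    have hcoreP : ∀ {e : Finset V}, e ∈ (T1 H v).filter (fun e => ¬ pend e) →
        ∀ u' ∈ e ∩ N2 H v, 2 ≤ dg1 H v u' := by
      intro e he u' hu'
      have hne := (mem_filter.mp he).2
      simp only [hpend] at hne
      push_neg at hne
      have := hne u' hu'
      omega
    calc 2 * ((T1 H v).filter fun e => ¬ pend e).card
        = ∑ _e ∈ (T1 H v).filter fun e => ¬ pend e, 2 := by rw [sum_const, smul_eq_mul, mul_comm]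
      _ ≤ ∑ e ∈ (T1 H v).filter fun e => ¬ pend e, (C.filter fun w => w ∈ e).card := by
          apply sum_le_sum
          intro e he
          have hsub : e ∩ N2 H v ⊆ C.filter fun w => w ∈ e := by
            intro u' hu'
            exact mem_filter.mpr ⟨mem_filter.mpr ⟨(mem_inter.mp hu').2, hcoreP he u' hu'⟩,
              (mem_inter.mp hu').1⟩
          calc 2 = (e ∩ N2 H v).card := (T1_pair_card hUnif (mem_of_mem_filter _ he)).symm
            _ ≤ _ := card_le_card hsub
      _ = ∑ u ∈ C, (((T1 H v).filter fun e => ¬ pend e).filter fun e => u ∈ e).card :=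
          (doublecount C _).symm
      _ ≤ ∑ _u ∈ C, 2 := by
          apply sum_le_sum
          intro u hu
          have huN2 : u ∈ N2 H v := mem_of_mem_filter _ hu
          calc (((T1 H v).filter fun e => ¬ pend e).filter fun e => u ∈ e).card
              ≤ (((T1 H v).filter fun e => ∀ u' ∈ e ∩ N2 H v, 2 ≤ dg1 H v u').filter
                  fun e => u ∈ e).card := by
                apply card_le_card
                intro e he
                obtain ⟨he', hue⟩ := mem_filter.mp he
                exact mem_filter.mpr ⟨mem_filter.mpr ⟨mem_of_mem_filter _ he', hcoreP he'⟩, hue⟩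
            _ ≤ 2 := core_deg_le_two hUnif hLin hNoC5 huN2
      _ = 2 * C.card := by rw [sum_const, smul_eq_mul, mul_comm]
  have hPC : P.card + C.card ≤ (N2 H v).card := by
    have hdisj : Disjoint P C := by
      rw [disjoint_left]
      intro a haP haC
      have h1 := (mem_filter.mp haP).2
      have h2 := (mem_filter.mp haC).2
      omega
    calc P.card + C.card = (P ∪ C).card := (card_union_of_disjoint hdisj).symm
      _ ≤ (N2 H v).card := card_le_card (union_subset (filter_subset _ _) (filter_subset _ _))
  omega

end LemA2

section LemB
variable {V : Type*} [DecidableEq V] {H : Finset (Finset V)} {v : V}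

/-- Edges avoiding `v` with at least two vertices in `N1`. -/
def S23 (H : Finset (Finset V)) (v : V) : Finset (Finset V) :=
  H.filter fun e => v ∉ e ∧ 2 ≤ (e ∩ N1 H v).card

def Qd (H : Finset (Finset V)) (v w : V) : ℕ := ((S23 H v).filter fun e => w ∈ e).card

lemma S23_memH {e : Finset V} (he : e ∈ S23 H v) : e ∈ H := (mem_filter.mp he).1
lemma S23_nv {e : Finset V} (he : e ∈ S23 H v) : v ∉ e := (mem_filter.mp he).2.1
lemma S23_card {e : Finset V} (he : e ∈ S23 H v) : 2 ≤ (e ∩ N1 H v).card :=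
  (mem_filter.mp he).2.2

/-- The "cherry" C5: an S23-edge with S23-edges hanging at two of its N1-vertices,
with hanging N1-vertices of different classes, yields a Berge C5. -/
lemma cherry (hLin : IsLinear H) (hNoC5 : ¬ HasBergeCycle H 5)
    {e e₂ f₂ : Finset V} {w y s g : V}
    (he : e ∈ S23 H v) (he₂ : e₂ ∈ S23 H v) (hf₂ : f₂ ∈ S23 H v)
    (hw : w ∈ e ∩ N1 H v) (hy : y ∈ e ∩ N1 H v) (hwy : w ≠ y)
    (hwe₂ : w ∈ e₂) (he₂e : e₂ ≠ e)
    (hyf₂ : y ∈ f₂) (hf₂e : f₂ ≠ e)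
    (hs : s ∈ (e₂ ∩ N1 H v).erase w) (hg : g ∈ (f₂ ∩ N1 H v).erase y)
    (hclass : vEdge H v s ≠ vEdge H v g) : False := by
  obtain ⟨hwe, hwN⟩ := mem_inter.mp hw
  obtain ⟨hye, hyN⟩ := mem_inter.mp hy
  have hsw : s ≠ w := (mem_erase.mp hs).1
  have hgy : g ≠ y := (mem_erase.mp hg).1
  obtain ⟨hse₂, hsN⟩ := mem_inter.mp (mem_of_mem_erase hs)
  obtain ⟨hgf₂, hgN⟩ := mem_inter.mp (mem_of_mem_erase hg)
  have hsg : s ≠ g := fun h => hclass (by rw [h])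
  have hsy : s ≠ y := by
    intro h
    exact he₂e (lin2 hLin (S23_memH he₂) (S23_memH he) hwy hwe₂ (h ▸ hse₂) hwe hye)
  have hgw : g ≠ w := by
    intro h
    exact hf₂e (lin2 hLin (S23_memH hf₂) (S23_memH he) hwy (h ▸ hgf₂) hyf₂ hwe hye)
  have he₂f₂ : e₂ ≠ f₂ := by
    intro h
    exact he₂e (lin2 hLin (S23_memH he₂) (S23_memH he) hwy hwe₂ (h ▸ hyf₂) hwe hye)
  -- vertices: v, s, w, y, g ; edges: vEdge s, e₂, e, f₂, vEdge g
  exact mk_c5 hNoC5 (vEdge_mem hsN) (S23_memH he₂) (S23_memH he) (S23_memH hf₂) (vEdge_mem hgN)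
    (Ne.symm (N1_ne_v hsN)) (Ne.symm (N1_ne_v hwN)) (Ne.symm (N1_ne_v hyN)) (Ne.symm (N1_ne_v hgN))
    hsw hsy hsg hwy (Ne.symm hgw) (Ne.symm hgy)
    (vEdge_ne_of_not_mem hsN (S23_nv he₂)) (vEdge_ne_of_not_mem hsN (S23_nv he))
    (vEdge_ne_of_not_mem hsN (S23_nv hf₂)) hclass
    he₂e he₂f₂ (fun h => (vEdge_ne_of_not_mem hgN (S23_nv he₂)) h.symm)
    (Ne.symm hf₂e) (fun h => (vEdge_ne_of_not_mem hgN (S23_nv he)) h.symm)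
    (fun h => (vEdge_ne_of_not_mem hgN (S23_nv hf₂)) h.symm)
    (v_mem_vEdge hsN) (mem_vEdge hsN)
    hse₂ hwe₂
    hwe hye
    hyf₂ hgf₂
    (mem_vEdge hgN) (v_mem_vEdge hgN)

/-- If an S23-edge has a vertex of Q-degree ≥ 4, all its other N1-vertices have Q-degree ≤ 1. -/
lemma B3 (hUnif : ∀ e ∈ H, e.card = 3) (hLin : IsLinear H) (hNoC5 : ¬ HasBergeCycle H 5)
    {e : Finset V} {w y : V} (he : e ∈ S23 H v)
    (hw : w ∈ e ∩ N1 H v) (hy : y ∈ e ∩ N1 H v) (hwy : w ≠ y)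
    (h4 : 4 ≤ Qd H v w) (h2 : 2 ≤ Qd H v y) : False := by
  classical
  obtain ⟨hwe, hwN⟩ := mem_inter.mp hw
  obtain ⟨hye, hyN⟩ := mem_inter.mp hy
  -- a second edge at y
  obtain ⟨f₂, hf₂mem, hf₂e⟩ := exists_mem_ne (show 1 < Qd H v y by omega) e
  obtain ⟨hf₂S, hyf₂⟩ := mem_filter.mp hf₂mem
  -- pick g in f₂ ∩ N1 - y
  have hgne : ((f₂ ∩ N1 H v).erase y).Nonempty := by
    apply card_pos.mp
    rw [card_erase_of_mem (mem_inter.mpr ⟨hyf₂, hyN⟩)]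
    have := S23_card hf₂S
    omega
  obtain ⟨g, hg⟩ := hgne
  obtain ⟨hgf₂, hgN⟩ := mem_inter.mp (mem_of_mem_erase hg)
  -- the set of other edges at w
  set T := ((S23 H v).filter fun e' => w ∈ e').erase e with hT
  have hTcard : 3 ≤ T.card := by
    rw [hT, card_erase_of_mem (mem_filter.mpr ⟨he, hwe⟩)]
    have : Qd H v w = ((S23 H v).filter fun e' => w ∈ e').card := rfl
    omega
  -- choice of hanging vertex for each e₂ ∈ T
  have hprop : ∀ e₂ ∈ T, ((e₂ ∩ N1 H v).erase w).Nonempty := by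
    intro e₂ he₂
    obtain ⟨he₂f, he₂e⟩ := (mem_erase.mp he₂).symm.imp id id
    -- he₂ : e₂ ∈ erase; components
    have he₂S : e₂ ∈ S23 H v := mem_of_mem_filter _ (mem_of_mem_erase he₂)
    have hwe₂ : w ∈ e₂ := (mem_filter.mp (mem_of_mem_erase he₂)).2
    apply card_pos.mp
    rw [card_erase_of_mem (mem_inter.mpr ⟨hwe₂, hwN⟩)]
    have := S23_card he₂S
    omega
  have hclaim : ∀ e₂ ∈ T, ∀ s ∈ (e₂ ∩ N1 H v).erase w, vEdge H v s = vEdge H v g := by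
    intro e₂ he₂ s hs
    by_contra hcl
    have he₂S : e₂ ∈ S23 H v := mem_of_mem_filter _ (mem_of_mem_erase he₂)
    have hwe₂ : w ∈ e₂ := (mem_filter.mp (mem_of_mem_erase he₂)).2
    exact cherry hLin hNoC5 he he₂S hf₂S hw hy hwy hwe₂ (mem_erase.mp he₂).1 hyf₂ hf₂e hs hg hcl
  -- injection from T into (vEdge g).erase v, contradiction with |T| ≥ 3
  have hmap : ∀ e₂ ∈ T,
      (if h : ((e₂ ∩ N1 H v).erase w).Nonempty then h.choose else v) ∈ (vEdge H v g).erase v ∧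
      (if h : ((e₂ ∩ N1 H v).erase w).Nonempty then h.choose else v) ∈ (e₂ ∩ N1 H v).erase w := by
    intro e₂ he₂
    rw [dif_pos (hprop e₂ he₂)]
    have hsmem := (hprop e₂ he₂).choose_spec
    have hsN : (hprop e₂ he₂).choose ∈ N1 H v := (mem_inter.mp (mem_of_mem_erase hsmem)).2
    have := hclaim e₂ he₂ _ hsmem
    refine ⟨mem_erase.mpr ⟨N1_ne_v hsN, ?_⟩, hsmem⟩
    rw [← this]
    exact mem_vEdge hsN
  have hinj : T.card ≤ ((vEdge H v g).erase v).card := by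
    apply card_le_card_of_injOn (fun e₂ => if h : ((e₂ ∩ N1 H v).erase w).Nonempty then h.choose else v)
    · intro e₂ he₂; exact (hmap e₂ he₂).1
    · intro e₂ he₂ e₂' he₂' hEq
      dsimp only at hEq
      have h1 := (hmap e₂ he₂).2
      have h2 := (hmap e₂' he₂').2
      rw [← hEq] at h2
      set s := if h : ((e₂ ∩ N1 H v).erase w).Nonempty then h.choose else v with hs
      have hse : s ∈ e₂ := (mem_inter.mp (mem_of_mem_erase h1)).1
      have hse' : s ∈ e₂' := (mem_inter.mp (mem_of_mem_erase h2)).1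
      have hsw : s ≠ w := (mem_erase.mp h1).1
      have hwe₂ : w ∈ e₂ := (mem_filter.mp (mem_of_mem_erase he₂)).2
      have hwe₂' : w ∈ e₂' := (mem_filter.mp (mem_of_mem_erase he₂')).2
      exact lin2 hLin (S23_memH (mem_of_mem_filter _ (mem_of_mem_erase he₂)))
        (S23_memH (mem_of_mem_filter _ (mem_of_mem_erase he₂'))) hsw hse hwe₂ hse' hwe₂'
  have : ((vEdge H v g).erase v).card = 2 := by
    rw [card_erase_of_mem (v_mem_vEdge hgN), hUnif _ (vEdge_mem hgN)]
  omega

/-- Each S23-edge contains at most one vertex of Q-degree ≥ 4. -/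
lemma B4a (hUnif : ∀ e ∈ H, e.card = 3) (hLin : IsLinear H) (hNoC5 : ¬ HasBergeCycle H 5)
    {e : Finset V} (he : e ∈ S23 H v) :
    ((((N1 H v).filter fun w => 4 ≤ Qd H v w)).filter fun w => w ∈ e).card ≤ 1 := by
  apply card_le_one.mpr
  intro a ha b hb
  by_contra hab
  obtain ⟨haHi, hae⟩ := mem_filter.mp ha
  obtain ⟨hbHi, hbe⟩ := mem_filter.mp hb
  obtain ⟨haN, haQ⟩ := mem_filter.mp haHi
  obtain ⟨hbN, hbQ⟩ := mem_filter.mp hbHi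
  exact B3 hUnif hLin hNoC5 he (mem_inter.mpr ⟨hae, haN⟩) (mem_inter.mpr ⟨hbe, hbN⟩) hab haQ
    (by omega)

/-- Total incidence count of S23-edges with N1. -/
lemma sum_S23_le (hUnif : ∀ e ∈ H, e.card = 3) (hLin : IsLinear H)
    (hNoC5 : ¬ HasBergeCycle H 5) :
    ∑ e ∈ S23 H v, (e ∩ N1 H v).card ≤ 8 * hyperDeg H v := by
  classical
  have hswap : ∑ e ∈ S23 H v, (e ∩ N1 H v).card = ∑ w ∈ N1 H v, Qd H v w := by
    calc ∑ e ∈ S23 H v, (e ∩ N1 H v).card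
        = ∑ e ∈ S23 H v, ((N1 H v).filter fun w => w ∈ e).card := by
          apply sum_congr rfl
          intro e he
          rw [filter_mem_eq_inter, inter_comm]
      _ = ∑ w ∈ N1 H v, ((S23 H v).filter fun e => w ∈ e).card := (doublecount _ _).symm
      _ = ∑ w ∈ N1 H v, Qd H v w := rfl
  rw [hswap, ← sum_filter_add_sum_filter_not (N1 H v) (fun w => 4 ≤ Qd H v w) (Qd H v)]
  have hN1card : (N1 H v).card ≤ 2 * hyperDeg H v := card_N1_le hUnif
  have hlo : ∑ w ∈ ((N1 H v).filter (fun w => ¬ 4 ≤ Qd H v w)), Qd H v w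
      ≤ 3 * (N1 H v).card := by
    have hb : ∑ w ∈ ((N1 H v).filter (fun w => ¬ 4 ≤ Qd H v w)), Qd H v w
        ≤ ∑ _w ∈ ((N1 H v).filter (fun w => ¬ 4 ≤ Qd H v w)), 3 := by
      apply sum_le_sum
      intro w hw
      have := (mem_filter.mp hw).2
      omega
    have hc : (((N1 H v).filter (fun w => ¬ 4 ≤ Qd H v w))).card ≤ (N1 H v).card :=
      card_le_card (filter_subset _ _)
    rw [sum_const, smul_eq_mul, mul_comm] at hb
    omega
  have hhi : ∑ w ∈ ((N1 H v).filter (fun w => 4 ≤ Qd H v w)), Qd H v w ≤ (N1 H v).card := by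
    set Hi := (N1 H v).filter (fun w => 4 ≤ Qd H v w) with hHi
    set F := (S23 H v).filter (fun e => (Hi.filter (fun w => w ∈ e)).Nonempty) with hF
    have e1 : ∑ w ∈ Hi, Qd H v w = ∑ e ∈ S23 H v, ((Hi.filter fun w => w ∈ e)).card :=
      doublecount Hi (S23 H v)
    have e2 : ∑ e ∈ S23 H v, ((Hi.filter fun w => w ∈ e)).card ≤ F.card := by
      rw [← sum_filter_add_sum_filter_not (S23 H v)
        (fun e => ((Hi.filter fun w => w ∈ e)).Nonempty)
        (fun e => ((Hi.filter fun w => w ∈ e)).card)]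
      have z : ∑ e ∈ ((S23 H v).filter
          (fun e => ¬ ((Hi.filter fun w => w ∈ e)).Nonempty)), ((Hi.filter fun w => w ∈ e)).card
          = 0 := by
        apply sum_eq_zero
        intro e he
        have hne := (mem_filter.mp he).2
        rw [not_nonempty_iff_eq_empty] at hne
        rw [hne, card_empty]
      have o : ∑ e ∈ ((S23 H v).filter
          (fun e => ((Hi.filter fun w => w ∈ e)).Nonempty)), ((Hi.filter fun w => w ∈ e)).card
          ≤ ∑ _e ∈ ((S23 H v).filter
          (fun e => ((Hi.filter fun w => w ∈ e)).Nonempty)), 1 := by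
        apply sum_le_sum
        intro e he
        exact B4a hUnif hLin hNoC5 (mem_of_mem_filter _ he)
      rw [sum_const, smul_eq_mul, mul_one] at o
      rw [hF]
      omega
    have e3 : F.card ≤ (N1 H v).card := by
      have hstep : ∀ e ∈ F, ∃ y, y ∈ (e ∩ N1 H v) ∧ Qd H v y ≤ 1 ∧ y ∈ e := by
        intro e heF
        obtain ⟨heS, hne⟩ := mem_filter.mp heF
        obtain ⟨w, hwmem⟩ := hne
        obtain ⟨hwHi, hwe⟩ := mem_filter.mp hwmem
        obtain ⟨hwN, hwQ⟩ := mem_filter.mp hwHi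
        have hyne : ((e ∩ N1 H v).erase w).Nonempty := by
          apply card_pos.mp
          rw [card_erase_of_mem (mem_inter.mpr ⟨hwe, hwN⟩)]
          have := S23_card heS
          omega
        obtain ⟨y, hy⟩ := hyne
        have hyI := mem_of_mem_erase hy
        have hQy : Qd H v y ≤ 1 := by
          by_contra hq
          exact B3 hUnif hLin hNoC5 heS (mem_inter.mpr ⟨hwe, hwN⟩) hyI
            (fun h => (mem_erase.mp hy).1 h.symm) hwQ (by omega)
        exact ⟨y, hyI, hQy, (mem_inter.mp hyI).1⟩
      have hchoice : ∀ e ∈ F, (if h : ∃ y, y ∈ (e ∩ N1 H v) ∧ Qd H v y ≤ 1 ∧ y ∈ e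
          then h.choose else v) ∈ N1 H v ∧
          Qd H v (if h : ∃ y, y ∈ (e ∩ N1 H v) ∧ Qd H v y ≤ 1 ∧ y ∈ e
          then h.choose else v) ≤ 1 ∧
          (if h : ∃ y, y ∈ (e ∩ N1 H v) ∧ Qd H v y ≤ 1 ∧ y ∈ e then h.choose else v) ∈ e := by
        intro e heF
        rw [dif_pos (hstep e heF)]
        obtain ⟨h1, h2, h3⟩ := (hstep e heF).choose_spec
        exact ⟨(mem_inter.mp h1).2, h2, h3⟩
      apply card_le_card_of_injOn
        (fun e => if h : ∃ y, y ∈ (e ∩ N1 H v) ∧ Qd H v y ≤ 1 ∧ y ∈ e then h.choose else v)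
      · intro e he; exact (hchoice e he).1
      · intro e he e' he' hEq
        dsimp only at hEq
        have h1 := hchoice e he
        have h2 := hchoice e' he'
        rw [← hEq] at h2
        have hQ : ((S23 H v).filter
            fun e'' => (if h : ∃ y, y ∈ (e ∩ N1 H v) ∧ Qd H v y ≤ 1 ∧ y ∈ e
              then h.choose else v) ∈ e'').card ≤ 1 := h1.2.1
        have hm1 : e ∈ F := he
        have hm2 : e' ∈ F := he'
        rw [hF] at hm1 hm2
        exact card_le_one.mp hQ _
          (mem_filter.mpr ⟨mem_of_mem_filter _ hm1, h1.2.2⟩) _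
          (mem_filter.mpr ⟨mem_of_mem_filter _ hm2, h2.2.2⟩)
    omega
  omega

end LemB

section Main
variable {V : Type*} [DecidableEq V] {H : Finset (Finset V)} {v : V}

lemma key_count (hUnif : ∀ e ∈ H, e.card = 3) (hLin : IsLinear H)
    (hNoC5 : ¬ HasBergeCycle H 5) :
    ∑ x ∈ N1 H v, hyperDeg H x ≤ (N2 H v).card + 18 * hyperDeg H v := by
  classical
  have d0 : ∑ x ∈ N1 H v, hyperDeg H x = ∑ e ∈ H, (e ∩ N1 H v).card := by
    calc ∑ x ∈ N1 H v, hyperDeg H x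
        = ∑ x ∈ N1 H v, (H.filter fun e => x ∈ e).card := rfl
      _ = ∑ e ∈ H, ((N1 H v).filter fun x => x ∈ e).card := doublecount _ _
      _ = ∑ e ∈ H, (e ∩ N1 H v).card := by
          apply sum_congr rfl
          intro e he
          rw [filter_mem_eq_inter, inter_comm]
  have dsplit : ∑ e ∈ H, (e ∩ N1 H v).card
      = ∑ e ∈ (H.filter fun e => v ∈ e), (e ∩ N1 H v).card
        + ∑ e ∈ (H.filter fun e => ¬ v ∈ e), (e ∩ N1 H v).card :=
    (sum_filter_add_sum_filter_not H (fun e => v ∈ e) _).symm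
  have hv2 : ∑ e ∈ (H.filter fun e => v ∈ e), (e ∩ N1 H v).card ≤ 2 * hyperDeg H v := by
    have hb : ∑ e ∈ (H.filter fun e => v ∈ e), (e ∩ N1 H v).card
        ≤ ∑ _e ∈ (H.filter fun e => v ∈ e), 2 := by
      apply sum_le_sum
      intro e he
      obtain ⟨heH, hve⟩ := mem_filter.mp he
      have hsub : e ∩ N1 H v ⊆ e.erase v := by
        intro x hx
        exact mem_erase.mpr ⟨N1_ne_v (mem_inter.mp hx).2, (mem_inter.mp hx).1⟩
      calc (e ∩ N1 H v).card ≤ (e.erase v).card := card_le_card hsub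
        _ = 2 := by rw [card_erase_of_mem hve, hUnif e heH]
    rw [sum_const, smul_eq_mul, mul_comm] at hb
    exact hb
  have hsplit2 : ∑ e ∈ (H.filter fun e => ¬ v ∈ e), (e ∩ N1 H v).card
      = ∑ e ∈ S23 H v, (e ∩ N1 H v).card
        + ∑ e ∈ ((H.filter fun e => ¬ v ∈ e).filter fun e => ¬ 2 ≤ (e ∩ N1 H v).card),
            (e ∩ N1 H v).card := by
    rw [← sum_filter_add_sum_filter_not (H.filter fun e => ¬ v ∈ e)
      (fun e => 2 ≤ (e ∩ N1 H v).card) (fun e => (e ∩ N1 H v).card)]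
    congr 1
    rw [filter_filter]
    rfl
  have hrest : ∑ e ∈ ((H.filter fun e => ¬ v ∈ e).filter fun e => ¬ 2 ≤ (e ∩ N1 H v).card),
      (e ∩ N1 H v).card ≤ (T1 H v).card := by
    set G0 := (H.filter fun e => ¬ v ∈ e).filter fun e => ¬ 2 ≤ (e ∩ N1 H v).card with hG0
    rw [← sum_filter_add_sum_filter_not G0 (fun e => (e ∩ N1 H v).card = 1)
      (fun e => (e ∩ N1 H v).card)]
    have z : ∑ e ∈ (G0.filter fun e => ¬ (e ∩ N1 H v).card = 1), (e ∩ N1 H v).card = 0 := by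
      apply sum_eq_zero
      intro e he
      obtain ⟨heG, hne1⟩ := mem_filter.mp he
      have := (mem_filter.mp heG).2
      omega
    have o : ∑ e ∈ (G0.filter fun e => (e ∩ N1 H v).card = 1), (e ∩ N1 H v).card
        = (G0.filter fun e => (e ∩ N1 H v).card = 1).card := by
      rw [card_eq_sum_ones]
      apply sum_congr rfl
      intro e he
      exact (mem_filter.mp he).2
    have heq : G0.filter (fun e => (e ∩ N1 H v).card = 1) = T1 H v := by
      ext e
      rw [hG0]
      simp only [T1, mem_filter]
      constructor
      · rintro ⟨⟨⟨heH, hnv⟩, -⟩, h1⟩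
        exact ⟨heH, hnv, h1⟩
      · rintro ⟨heH, hnv, h1⟩
        exact ⟨⟨⟨heH, hnv⟩, by omega⟩, h1⟩
    rw [z, o, heq]
    omega
  have hT1 := card_T1_le (v := v) hUnif hLin hNoC5
  have hS23 := sum_S23_le (v := v) hUnif hLin hNoC5
  omega

end Main

theorem stmt_1 {V : Type*} [Fintype V] [DecidableEq V]
    (H : Finset (Finset V))
    (hUnif : ∀ e ∈ H, e.card = 3)
    (hLin : IsLinear H)
    (hNoC5 : ¬ HasBergeCycle H 5)
    (v : V) :
    ((N2 H v).card : ℤ) ≥ (∑ x ∈ N1 H v, (hyperDeg H x : ℤ)) - 18 * hyperDeg H v := by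
  have key := key_count (H := H) (v := v) hUnif hLin hNoC5
  have cast1 : (∑ x ∈ N1 H v, (hyperDeg H x : ℤ))
      = ((∑ x ∈ N1 H v, hyperDeg H x : ℕ) : ℤ) := by
    rw [Nat.cast_sum]
  rw [ge_iff_le, cast1, sub_le_iff_le_add]
  exact_mod_cast key
end

section
/- For every n that is 3 times a perfect square, there exists a 3-uniform linear hypergraph on n vertices with exactly (1/(3√3))·n^{3/2} hyperedges that contains no Berge cycle of length 5. -/
open Finset

namespace BergeAux

lemma zmod5_cases (i : ZMod 5) : i = 0 ∨ i = 1 ∨ i = 2 ∨ i = 3 ∨ i = 4 := by revert i; decide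

lemma zmod5_ne_sub_one : ∀ i : ZMod 5, i ≠ i - 1 := by decide

lemma fin3_cases : ∀ k : Fin 3, k = 0 ∨ k = 1 ∨ k = 2 := by decide

lemma chainC {m : ℕ} (g : ZMod 5 → Fin m) (hstep : ∀ i, g i = g (i - 1)) :
    ∀ i, g i = g 0 := by
  have g1 := hstep 1
  have g2 := hstep 2
  have g3 := hstep 3
  have g4 := hstep 4
  norm_num at g1 g2 g3 g4
  intro i
  rcases zmod5_cases i with h|h|h|h|h <;> subst h
  · rfl
  · exact g1
  · exact g2.trans g1
  · exact g3.trans (g2.trans g1)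
  · exact g4.trans (g3.trans (g2.trans g1))

lemma chainB {m : ℕ} (g : ZMod 5 → Fin m) (p q : ZMod 5) (hpq : p ≠ q)
    (hstep : ∀ i, i ≠ p → i ≠ q → g i = g (i - 1)) :
    ∀ j, g j = g p ∨ g j = g q := by
  have hforce : ∀ (r j : ZMod 5), r ≠ j → r ≠ j - 1 → r ≠ j - 1 - 1 → r ≠ j - 1 - 1 - 1 →
      r = j - 1 - 1 - 1 - 1 := by decide
  intro j
  by_cases h1 : j = p
  · exact Or.inl (by rw [h1])
  by_cases h2 : j = q
  · exact Or.inr (by rw [h2])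
  have e1 := hstep j h1 h2
  by_cases h3 : j - 1 = p
  · exact Or.inl (by rw [e1, h3])
  by_cases h4 : j - 1 = q
  · exact Or.inr (by rw [e1, h4])
  have e2 := hstep (j-1) h3 h4
  by_cases h5 : j - 1 - 1 = p
  · exact Or.inl (by rw [e1, e2, h5])
  by_cases h6 : j - 1 - 1 = q
  · exact Or.inr (by rw [e1, e2, h6])
  have e3 := hstep (j-1-1) h5 h6
  by_cases h7 : j - 1 - 1 - 1 = p
  · exact Or.inl (by rw [e1, e2, e3, h7])
  by_cases h8 : j - 1 - 1 - 1 = q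
  · exact Or.inr (by rw [e1, e2, e3, h8])
  exact absurd ((hforce p j (fun h => h1 h.symm) (fun h => h3 h.symm) (fun h => h5 h.symm)
      (fun h => h7 h.symm)).trans (hforce q j (fun h => h2 h.symm) (fun h => h4 h.symm)
      (fun h => h6 h.symm) (fun h => h8 h.symm)).symm) hpq

lemma caseB {m : ℕ} (x : ZMod 5 → Fin 3 → Fin m) (d : ZMod 5 → Fin 3)
    (hpres : ∀ i k, k ≠ d i → x i k = x (i-1) k)
    (k1 k2 k3 : Fin 3) (h12 : k1 ≠ k2) (h13 : k1 ≠ k3) (h23 : k2 ≠ k3)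
    (hc3 : (univ.filter (fun i => d i = k1)).card = 3)
    (hc2 : (univ.filter (fun i => d i = k2)).card = 2)
    (hc0 : ∀ i, d i ≠ k3) :
    ∃ i j : ZMod 5, i ≠ j ∧ d i = d j ∧ ∀ k, k ≠ d i → x i k = x j k := by
  obtain ⟨i1, i2, i3, n12, n13, n23, hS1⟩ := card_eq_three.mp hc3
  obtain ⟨p, q, hpq, hS2⟩ := card_eq_two.mp hc2
  have hdi1 : d i1 = k1 := (mem_filter.mp (by rw [hS1]; simp : i1 ∈ univ.filter (fun i => d i = k1))).2
  have hdi2 : d i2 = k1 := (mem_filter.mp (by rw [hS1]; simp : i2 ∈ univ.filter (fun i => d i = k1))).2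
  have hdi3 : d i3 = k1 := (mem_filter.mp (by rw [hS1]; simp : i3 ∈ univ.filter (fun i => d i = k1))).2
  have hmemk2 : ∀ i, d i = k2 → (i = p ∨ i = q) := by
    intro i h
    have : i ∈ (univ.filter (fun i => d i = k2)) := mem_filter.mpr ⟨mem_univ _, h⟩
    rw [hS2] at this
    simpa using this
  have hstep2 : ∀ i, i ≠ p → i ≠ q → x i k2 = x (i-1) k2 := by
    intro i hip hiq
    apply hpres
    intro hk
    rcases hmemk2 i hk.symm with h|h
    · exact hip h
    · exact hiq h
  have hB := chainB (fun i => x i k2) p q hpq hstep2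
  have hstep3 : ∀ i, x i k3 = x (i-1) k3 := fun i => hpres i k3 (fun h => hc0 i h.symm)
  have hC := chainC (fun i => x i k3) hstep3
  have hcov : ∀ k : Fin 3, k ≠ k1 → (k = k2 ∨ k = k3) := by
    intro k hk
    have H3 : ∀ a b c k : Fin 3, a ≠ b → a ≠ c → b ≠ c → k ≠ a → (k = b ∨ k = c) := by decide
    exact H3 k1 k2 k3 k h12 h13 h23 hk
  have P : ∀ i j : ZMod 5, d i = k1 → d j = k1 → x i k2 = x j k2 →
      ∀ k, k ≠ d i → x i k = x j k := by
    intro i j hi hj hxy k hk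
    rw [hi] at hk
    rcases hcov k hk with rfl|rfl
    · exact hxy
    · exact (hC i).trans (hC j).symm
  rcases hB i1 with b1|b1 <;> rcases hB i2 with b2|b2 <;> rcases hB i3 with b3|b3 <;>
    first
    | exact ⟨i1, i2, n12, hdi1.trans hdi2.symm, P i1 i2 hdi1 hdi2 (b1.trans b2.symm)⟩
    | exact ⟨i1, i3, n13, hdi1.trans hdi3.symm, P i1 i3 hdi1 hdi3 (b1.trans b3.symm)⟩
    | exact ⟨i2, i3, n23, hdi2.trans hdi3.symm, P i2 i3 hdi2 hdi3 (b2.trans b3.symm)⟩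

lemma core {m : ℕ} (x : ZMod 5 → Fin 3 → Fin m) (d : ZMod 5 → Fin 3)
    (hpres : ∀ i k, k ≠ d i → x i k = x (i-1) k)
    (hchg : ∀ i, x i (d i) ≠ x (i-1) (d i)) :
    ∃ i j : ZMod 5, i ≠ j ∧ d i = d j ∧ ∀ k, k ≠ d i → x i k = x j k := by
  set c : Fin 3 → ℕ := fun k => (univ.filter (fun i => d i = k)).card with hc
  have hsum : c 0 + c 1 + c 2 = 5 := by
    have h1 : (univ : Finset (ZMod 5)).card = ∑ k : Fin 3, c k := by
      apply Finset.card_eq_sum_card_fiberwise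
      intro i _
      exact mem_univ _
    have h2 : (univ : Finset (ZMod 5)).card = 5 := by simp
    rw [h2, Fin.sum_univ_three] at h1
    omega
  have hA : ∀ k, c k ≠ 1 := by
    intro k hk
    obtain ⟨i0, hi0⟩ := card_eq_one.mp hk
    have hd0 : d i0 = k := (mem_filter.mp (by rw [hi0]; simp : i0 ∈ univ.filter (fun i => d i = k))).2
    have hne : ∀ i, i ≠ i0 → d i ≠ k := by
      intro i hi hdi
      exact hi (mem_singleton.mp (hi0 ▸ mem_filter.mpr ⟨mem_univ _, hdi⟩))
    have st : ∀ i, i ≠ i0 → x i k = x (i - 1) k := by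
      intro i hi
      exact hpres i k (fun h => hne i hi (h ▸ rfl) )
    have d1 : ∀ i : ZMod 5, i + 1 ≠ i := by decide
    have d2 : ∀ i : ZMod 5, i + 2 ≠ i := by decide
    have d3 : ∀ i : ZMod 5, i + 3 ≠ i := by decide
    have d4 : ∀ i : ZMod 5, i + 4 ≠ i := by decide
    have s1 := st (i0+1) (d1 i0)
    have s2 := st (i0+2) (d2 i0)
    have s3 := st (i0+3) (d3 i0)
    have s4 := st (i0+4) (d4 i0)
    have e1 : i0 + 1 - 1 = i0 := by ring
    have e2 : i0 + 2 - 1 = i0 + 1 := by ring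
    have e3 : i0 + 3 - 1 = i0 + 2 := by ring
    have e4 : i0 + 4 - 1 = i0 + 3 := by ring
    rw [e1] at s1; rw [e2] at s2; rw [e3] at s3; rw [e4] at s4
    have e5 : i0 + 4 = i0 - 1 := by
      have : (4 : ZMod 5) = -1 := by decide
      rw [this]; ring
    rw [e5] at s4
    exact hchg i0 (by rw [hd0]; exact (s4.trans (s3.trans (s2.trans s1))).symm)
  have hle : ∀ k, c k ≤ 5 := by
    intro k
    have := Finset.card_filter_le (univ : Finset (ZMod 5)) (fun i => d i = k)
    simpa using this
  have hdisj : (c 0 = 5 ∨ c 1 = 5 ∨ c 2 = 5) ∨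
      ((c 0 = 3 ∧ c 1 = 2) ∨ (c 0 = 3 ∧ c 2 = 2) ∨ (c 1 = 3 ∧ c 0 = 2) ∨
       (c 1 = 3 ∧ c 2 = 2) ∨ (c 2 = 3 ∧ c 0 = 2) ∨ (c 2 = 3 ∧ c 1 = 2)) := by
    have := hA 0; have := hA 1; have := hA 2
    omega
  have caseA : ∀ k : Fin 3, c k = 5 →
      ∃ i j : ZMod 5, i ≠ j ∧ d i = d j ∧ ∀ k, k ≠ d i → x i k = x j k := by
    intro k hk
    have huniv : univ.filter (fun i => d i = k) = univ := by
      apply Finset.eq_univ_of_card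
      show c k = Fintype.card (ZMod 5)
      rw [hk]; rfl
    have hall : ∀ i, d i = k := by
      intro i
      exact (mem_filter.mp (by rw [huniv]; exact mem_univ i : i ∈ univ.filter (fun i => d i = k))).2
    refine ⟨1, 0, by decide, (hall 1).trans (hall 0).symm, ?_⟩
    intro k' hk'
    have := hpres 1 k' hk'
    norm_num at this
    exact this
  have hzero : ∀ k : Fin 3, c k = 0 → ∀ i, d i ≠ k := by
    intro k hk i hdi
    have he := card_eq_zero.mp hk
    exact absurd (mem_filter.mpr ⟨mem_univ i, hdi⟩) (by rw [he]; simp)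
  rcases hdisj with (h|h|h) | (⟨ha,hb⟩|⟨ha,hb⟩|⟨ha,hb⟩|⟨ha,hb⟩|⟨ha,hb⟩|⟨ha,hb⟩)
  · exact caseA 0 h
  · exact caseA 1 h
  · exact caseA 2 h
  · exact caseB x d hpres 0 1 2 (by decide) (by decide) (by decide) ha hb (hzero 2 (by omega))
  · exact caseB x d hpres 0 2 1 (by decide) (by decide) (by decide) ha hb (hzero 1 (by omega))
  · exact caseB x d hpres 1 0 2 (by decide) (by decide) (by decide) ha hb (hzero 2 (by omega))
  · exact caseB x d hpres 1 2 0 (by decide) (by decide) (by decide) ha hb (hzero 0 (by omega))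
  · exact caseB x d hpres 2 0 1 (by decide) (by decide) (by decide) ha hb (hzero 1 (by omega))
  · exact caseB x d hpres 2 1 0 (by decide) (by decide) (by decide) ha hb (hzero 0 (by omega))

variable {m : ℕ}

def E (a b c : Fin m) : Finset (Fin 3 × Fin m × Fin m) := {(0,a,b), (1,a,c), (2,b,c)}

lemma mem_E {z : Fin 3 × Fin m × Fin m} {a b c : Fin m} :
    z ∈ E a b c ↔ z = (0,a,b) ∨ z = (1,a,c) ∨ z = (2,b,c) := by
  simp [E]

def HW (m : ℕ) : Finset (Finset (Fin 3 × Fin m × Fin m)) :=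
  (univ : Finset (Fin m × Fin m × Fin m)).image fun p => E p.1 p.2.1 p.2.2

lemma E_card (a b c : Fin m) : (E a b c).card = 3 := by
  rw [E, card_insert_of_notMem (by simp [Prod.ext_iff]),
    card_insert_of_notMem (by simp [Prod.ext_iff]), card_singleton]

lemma E_inj {a b c a' b' c' : Fin m} (h : E a b c = E a' b' c') :
    a = a' ∧ b = b' ∧ c = c' := by
  have h1 : ((0:Fin 3),a,b) ∈ E a' b' c' := by rw [← h]; simp [E]
  have h2 : ((1:Fin 3),a,c) ∈ E a' b' c' := by rw [← h]; simp [E]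
  rw [mem_E] at h1 h2
  simp only [Prod.mk.injEq] at h1 h2
  norm_num at h1 h2
  rcases h1 with ⟨e1, e2⟩ | ⟨h0, -⟩
  · rcases h2 with ⟨-, e3⟩ | ⟨h0, -⟩
    · exact ⟨e1, e2, e3⟩
    · exact absurd h0 (by decide)
  · exact absurd h0 (by decide)

lemma HW_card : (HW m).card = m ^ 3 := by
  rw [HW, card_image_of_injective _ ?_, card_univ]
  · simp [Fintype.card_prod]; ring
  · intro p p' h
    obtain ⟨h1, h2, h3⟩ := E_inj h
    exact Prod.ext h1 (Prod.ext h2 h3)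

lemma HW_edge_card : ∀ e ∈ HW m, e.card = 3 := by
  intro e he
  simp only [HW, mem_image, mem_univ, true_and] at he
  obtain ⟨p, rfl⟩ := he
  exact E_card _ _ _

lemma HW_linear : IsLinear (HW m) := by
  intro e he f hf hef
  simp only [HW, mem_image, mem_univ, true_and] at he hf
  obtain ⟨⟨a,b,c⟩, rfl⟩ := he
  obtain ⟨⟨a',b',c'⟩, rfl⟩ := hf
  by_contra hcard
  push_neg at hcard
  obtain ⟨u, hu, w, hw, huw⟩ := Finset.one_lt_card.mp hcard
  simp only [mem_inter, mem_E] at hu hw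
  obtain ⟨hu1, hu2⟩ := hu
  obtain ⟨hw1, hw2⟩ := hw
  apply hef
  rcases hu1 with rfl|rfl|rfl <;> rcases hw1 with rfl|rfl|rfl <;>
    rcases hu2 with h|h|h <;> rcases hw2 with h'|h'|h' <;>
    simp_all [Prod.ext_iff]

def vtx (k : Fin 3) (f : Fin 3 → Fin m) : Fin 3 × Fin m × Fin m :=
  ![((2:Fin 3), f 1, f 2), (1, f 0, f 2), (0, f 0, f 1)] k

lemma vtx_congr (k : Fin 3) (f g : Fin 3 → Fin m) (h : ∀ k', k' ≠ k → f k' = g k') :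
    vtx k f = vtx k g := by
  rcases fin3_cases k with rfl|rfl|rfl
  · simp [vtx, h 1 (by decide), h 2 (by decide)]
  · simp [vtx, h 0 (by decide), h 2 (by decide)]
  · simp [vtx, h 0 (by decide), h 1 (by decide)]

lemma HW_noBerge : ¬ HasBergeCycle (HW m) 5 := by
  rintro ⟨v, h, hvinj, hhinj, hmem⟩
  have hx : ∀ i : ZMod 5, ∃ p : Fin m × Fin m × Fin m, h i = E p.1 p.2.1 p.2.2 := by
    intro i
    have := (hmem i).1
    simp only [HW, mem_image, mem_univ, true_and] at this
    obtain ⟨p, hp⟩ := this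
    exact ⟨p, hp.symm⟩
  choose p hp using hx
  set x : ZMod 5 → Fin 3 → Fin m := fun i => ![(p i).1, (p i).2.1, (p i).2.2] with hxdef
  have hpE : ∀ i, h i = E (x i 0) (x i 1) (x i 2) := by
    intro i
    simpa [hxdef] using hp i
  set d : ZMod 5 → Fin 3 := fun i => ![2,1,0] (v i).1 with hddef
  have hhne : ∀ i : ZMod 5, h i ≠ h (i-1) := fun i he => zmod5_ne_sub_one i (hhinj he)
  have key : ∀ i : ZMod 5, (∀ k, k ≠ d i → x i k = x (i-1) k) ∧
      (x i (d i) ≠ x (i-1) (d i)) ∧ v i = vtx (d i) (x i) := by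
    intro i
    have h1 : v i ∈ h i := (hmem i).2.1
    have h2 : v i ∈ h (i-1) := by
      have := (hmem (i-1)).2.2
      rwa [sub_add_cancel] at this
    rw [hpE i, mem_E] at h1
    rw [hpE (i-1), mem_E] at h2
    rcases h1 with c1|c1|c1 <;> rcases h2 with c2|c2|c2 <;>
      [skip;
       exact absurd (c1.symm.trans c2) (by simp [Prod.ext_iff]);
       exact absurd (c1.symm.trans c2) (by simp [Prod.ext_iff]);
       exact absurd (c1.symm.trans c2) (by simp [Prod.ext_iff]);
       skip;
       exact absurd (c1.symm.trans c2) (by simp [Prod.ext_iff]);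
       exact absurd (c1.symm.trans c2) (by simp [Prod.ext_iff]);
       exact absurd (c1.symm.trans c2) (by simp [Prod.ext_iff]);
       skip]
    · -- B vertex: coords 0,1 preserved, d i = 2
      have cc := c1.symm.trans c2
      simp only [Prod.mk.injEq] at cc
      obtain ⟨-, e0, e1⟩ := cc
      have hdi : d i = 2 := by simp only [hddef]; rw [c1]; rfl
      refine ⟨?_, ?_, ?_⟩
      · intro k hk
        rw [hdi] at hk
        rcases fin3_cases k with rfl|rfl|rfl
        · exact e0
        · exact e1
        · exact absurd rfl hk
      · rw [hdi]
        intro e2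
        exact hhne i (by rw [hpE i, hpE (i-1), e0, e1, e2])
      · rw [hdi, c1]; rfl
    · -- L vertex: coords 0,2 preserved, d i = 1
      have cc := c1.symm.trans c2
      simp only [Prod.mk.injEq] at cc
      obtain ⟨-, e0, e2⟩ := cc
      have hdi : d i = 1 := by simp only [hddef]; rw [c1]; rfl
      refine ⟨?_, ?_, ?_⟩
      · intro k hk
        rw [hdi] at hk
        rcases fin3_cases k with rfl|rfl|rfl
        · exact e0
        · exact absurd rfl hk
        · exact e2
      · rw [hdi]
        intro e1
        exact hhne i (by rw [hpE i, hpE (i-1), e0, e1, e2])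
      · rw [hdi, c1]; rfl
    · -- R vertex: coords 1,2 preserved, d i = 0
      have cc := c1.symm.trans c2
      simp only [Prod.mk.injEq] at cc
      obtain ⟨-, e1, e2⟩ := cc
      have hdi : d i = 0 := by simp only [hddef]; rw [c1]; rfl
      refine ⟨?_, ?_, ?_⟩
      · intro k hk
        rw [hdi] at hk
        rcases fin3_cases k with rfl|rfl|rfl
        · exact absurd rfl hk
        · exact e1
        · exact e2
      · rw [hdi]
        intro e0
        exact hhne i (by rw [hpE i, hpE (i-1), e0, e1, e2])
      · rw [hdi, c1]; rfl
  obtain ⟨i, j, hij, hdij, hxx⟩ := core x d (fun i k hk => (key i).1 k hk) (fun i => (key i).2.1)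
  exact hij (hvinj ((key i).2.2.trans
    (((vtx_congr (d i) (x i) (x j) hxx).trans (by rw [hdij])).trans (key j).2.2.symm)))

lemma transport {V V' : Type*} [DecidableEq V] [DecidableEq V'] (σ : V ≃ V')
    (H : Finset (Finset V)) :
    ∃ H' : Finset (Finset V'),
      H'.card = H.card ∧
      (∀ f ∈ H', ∃ A ∈ H, f.card = A.card) ∧
      (IsLinear H → IsLinear H') ∧
      (¬ HasBergeCycle H 5 → ¬ HasBergeCycle H' 5) := by
  refine ⟨H.image (Finset.map σ.toEmbedding), ?_, ?_, ?_, ?_⟩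
  · exact card_image_of_injective _ (Finset.map_injective σ.toEmbedding)
  · intro f hf
    obtain ⟨A, hA, rfl⟩ := mem_image.mp hf
    exact ⟨A, hA, card_map _⟩
  · intro hlin f hf g hg hfg
    obtain ⟨A, hA, rfl⟩ := mem_image.mp hf
    obtain ⟨B, hB, rfl⟩ := mem_image.mp hg
    have hAB : A ≠ B := fun h => hfg (by rw [h])
    rw [← Finset.map_inter, card_map]
    exact hlin A hA B hB hAB
  · intro hnb hb
    apply hnb
    obtain ⟨v, h, hvinj, hhinj, hmem⟩ := hb
    have hg : ∀ i : ZMod 5, ∃ A ∈ H, A.map σ.toEmbedding = h i := by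
      intro i
      exact mem_image.mp (hmem i).1
    choose g hgH hgmap using hg
    refine ⟨fun i => σ.symm (v i), g, ?_, ?_, ?_⟩
    · intro i j hij
      exact hvinj (σ.symm.injective.eq_iff.mp hij |> fun h => h) |>.symm ▸ rfl
    · intro i j hij
      apply hhinj
      rw [← hgmap i, ← hgmap j, hij]
    · intro i
      refine ⟨hgH i, ?_, ?_⟩
      · have : v i ∈ (g i).map σ.toEmbedding := by rw [hgmap i]; exact (hmem i).2.1
        obtain ⟨w, hw, hwe⟩ := mem_map.mp this
        have : σ.symm (v i) = w := by rw [← hwe]; simp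
        show σ.symm (v i) ∈ g i
        rwa [this]
      · have : v (i+1) ∈ (g i).map σ.toEmbedding := by rw [hgmap i]; exact (hmem i).2.2
        obtain ⟨w, hw, hwe⟩ := mem_map.mp this
        have : σ.symm (v (i+1)) = w := by rw [← hwe]; simp
        show σ.symm (v (i+1)) ∈ g i
        rwa [this]

lemma calc1 (m : ℕ) :
    ((m ^ 3 : ℕ) : ℝ) = 1 / (3 * Real.sqrt 3) * ((3 * m ^ 2 : ℕ) : ℝ) ^ ((3:ℝ)/2) := by
  have hs : Real.sqrt 3 > 0 := Real.sqrt_pos.mpr (by norm_num)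
  push_cast
  rw [Real.mul_rpow (by norm_num) (by positivity)]
  rw [← Real.rpow_natCast (m:ℝ) 2, ← Real.rpow_mul (by positivity)]
  norm_num
  have h1 : ((3:ℝ)) ^ ((3:ℝ)/2) = 3 * Real.sqrt 3 := by
    have : (3:ℝ)/2 = 1 + 1/2 := by norm_num
    rw [this, Real.rpow_add (by norm_num), Real.rpow_one, Real.sqrt_eq_rpow]
  rw [h1]
  have h2 : (m:ℝ) ^ ((3:ℝ)) = (m:ℝ)^(3:ℕ) := by
    rw [← Real.rpow_natCast (m:ℝ) 3]; norm_num
  field_simp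

end BergeAux

theorem stmt_3 (n m : ℕ) (hn : n = 3 * m ^ 2) :
    ∃ H : Finset (Finset (Fin n)),
      (∀ e ∈ H, e.card = 3) ∧ IsLinear H ∧ ¬ HasBergeCycle H 5 ∧
      (H.card : ℝ) = (1 / (3 * Real.sqrt 3)) * (n : ℝ) ^ ((3 : ℝ) / 2) := by
  have hcard : Fintype.card (Fin 3 × Fin m × Fin m) = n := by
    simp [hn]; ring
  let σ : (Fin 3 × Fin m × Fin m) ≃ Fin n := Fintype.equivFinOfCardEq hcard
  obtain ⟨H, hc, hedge, hlin, hnb⟩ := BergeAux.transport σ (BergeAux.HW m)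
  refine ⟨H, ?_, hlin BergeAux.HW_linear, hnb BergeAux.HW_noBerge, ?_⟩
  · intro e he
    obtain ⟨A, hA, hcA⟩ := hedge e he
    rw [hcA]
    exact BergeAux.HW_edge_card A hA
  · rw [hc, BergeAux.HW_card, hn]
    exact_mod_cast BergeAux.calc1 m
end

section
/- Let H be a 3-uniform linear hypergraph on n vertices containing no Berge cycle of length 4. Then for every vertex v of H, ∑_{x ∈ N₁(v)} 2·d(x) ≤ n + 12·d(v). -/
open Finset

lemma four_in_three {V : Type*} [DecidableEq V] {e : Finset V} (he : e.card = 3)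
    {a b c d : V} (ha : a ∈ e) (hb : b ∈ e) (hc : c ∈ e) (hd : d ∈ e)
    (hab : a ≠ b) (hac : a ≠ c) (had : a ≠ d) (hbc : b ≠ c) (hbd : b ≠ d) (hcd : c ≠ d) :
    False := by
  have hsub : ({a, b, c, d} : Finset V) ⊆ e := by
    intro z hz
    simp only [Finset.mem_insert, Finset.mem_singleton] at hz
    rcases hz with rfl|rfl|rfl|rfl <;> assumption
  have hcard : ({a, b, c, d} : Finset V).card = 4 := by
    rw [Finset.card_insert_of_notMem (by simp [hab, hac, had]),
        Finset.card_insert_of_notMem (by simp [hbc, hbd]),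
        Finset.card_pair hcd]
  have := Finset.card_le_card hsub
  omega

lemma lin_eq {V : Type*} [DecidableEq V] {H : Finset (Finset V)} (hLin : IsLinear H)
    {e f : Finset V} (he : e ∈ H) (hf : f ∈ H) {a b : V}
    (hae : a ∈ e) (haf : a ∈ f) (hbe : b ∈ e) (hbf : b ∈ f) (hab : a ≠ b) : e = f := by
  by_contra hne
  have h2 : ({a, b} : Finset V) ⊆ e ∩ f := by
    intro z hz
    simp only [Finset.mem_insert, Finset.mem_singleton] at hz
    rcases hz with rfl|rfl <;> simp [Finset.mem_inter, *]
  have h3 := (Finset.card_le_card h2).trans (hLin e he f hf hne)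
  rw [Finset.card_pair hab] at h3
  omega

lemma mem_N1 {V : Type*} [DecidableEq V] {H : Finset (Finset V)} {v x : V} :
    x ∈ N1 H v ↔ x ≠ v ∧ ∃ e ∈ H, v ∈ e ∧ x ∈ e := by
  simp only [N1, Finset.mem_erase, Finset.mem_biUnion, Finset.mem_filter, id]
  tauto



lemma berge4 {V : Type*} (H : Finset (Finset V)) {a b c d : V} {p q r s : Finset V}
    (hp : p ∈ H) (hq : q ∈ H) (hr : r ∈ H) (hs : s ∈ H)
    (hab : a ≠ b) (hac : a ≠ c) (had : a ≠ d) (hbc : b ≠ c) (hbd : b ≠ d) (hcd : c ≠ d)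
    (hpq : p ≠ q) (hpr : p ≠ r) (hps : p ≠ s) (hqr : q ≠ r) (hqs : q ≠ s) (hrs : r ≠ s)
    (hap : a ∈ p) (hbp : b ∈ p) (hbq : b ∈ q) (hcq : c ∈ q) (hcr : c ∈ r) (hdr : d ∈ r)
    (hds : d ∈ s) (has : a ∈ s) :
    HasBergeCycle H 4 := by
  have hz : ∀ k : ZMod 4, k = 0 ∨ k = 1 ∨ k = 2 ∨ k = 3 := by decide
  have e10 : (1 : ZMod 4) ≠ 0 := by decide
  have e20 : (2 : ZMod 4) ≠ 0 := by decide
  have e21 : (2 : ZMod 4) ≠ 1 := by decide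
  have e30 : (3 : ZMod 4) ≠ 0 := by decide
  have e31 : (3 : ZMod 4) ≠ 1 := by decide
  have e32 : (3 : ZMod 4) ≠ 2 := by decide
  have a01 : (0 + 1 : ZMod 4) = 1 := by decide
  have a12 : (1 + 1 : ZMod 4) = 2 := by decide
  have a23 : (2 + 1 : ZMod 4) = 3 := by decide
  have a30 : (3 + 1 : ZMod 4) = 0 := by decide
  refine ⟨fun i => if i = 0 then a else if i = 1 then b else if i = 2 then c else d,
    fun i => if i = 0 then p else if i = 1 then q else if i = 2 then r else s, ?_, ?_, ?_⟩
  · intro i j hij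
    rcases hz i with rfl|rfl|rfl|rfl <;> rcases hz j with rfl|rfl|rfl|rfl <;> simp_all
  · intro i j hij
    rcases hz i with rfl|rfl|rfl|rfl <;> rcases hz j with rfl|rfl|rfl|rfl <;> simp_all
  · intro i
    rcases hz i with rfl|rfl|rfl|rfl <;> simp_all



/-- If two distinct hyperedges avoiding `v` connect distinct vertices `x1, x2` through a common
vertex `u`, then any `v`-edges `f1 ∋ x1`, `f2 ∋ x2` coincide. -/
lemma L1 {V : Type*} [DecidableEq V] {H : Finset (Finset V)} (hNoC4 : ¬ HasBergeCycle H 4)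
    {v x1 x2 u : V} {f1 f2 e1 e2 : Finset V}
    (hf1 : f1 ∈ H) (hf2 : f2 ∈ H) (he1 : e1 ∈ H) (he2 : e2 ∈ H)
    (hvf1 : v ∈ f1) (hvf2 : v ∈ f2) (hx1f1 : x1 ∈ f1) (hx2f2 : x2 ∈ f2)
    (hne : e1 ≠ e2) (hv1 : v ∉ e1) (hv2 : v ∉ e2)
    (hx1e1 : x1 ∈ e1) (hx2e2 : x2 ∈ e2) (hue1 : u ∈ e1) (hue2 : u ∈ e2)
    (hx12 : x1 ≠ x2) (hux1 : u ≠ x1) (hux2 : u ≠ x2) : f1 = f2 := by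
  by_contra hf
  exact hNoC4 (berge4 H hf1 he1 he2 hf2
    (fun h => hv1 (by rw [h]; exact hx1e1)) (fun h => hv1 (by rw [h]; exact hue1)) (fun h => hv2 (by rw [h]; exact hx2e2))
    hux1.symm hx12 hux2
    (fun h => hv1 (by rw [← h]; exact hvf1)) (fun h => hv2 (by rw [← h]; exact hvf1))
    hf hne
    (fun h => hv1 (by rw [h]; exact hvf2)) (fun h => hv2 (by rw [h]; exact hvf2))
    hvf1 hx1f1 hx1e1 hue1 hue2 hx2e2 hx2f2 hvf2)

/-- Two "double" vertices `u ≠ u'` joined to `a` and `b` by pairs of distinct edges must share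
the `a`-side edge or the `b`-side edge. -/
lemma sharePair {V : Type*} [DecidableEq V] {H : Finset (Finset V)}
    (hUnif : ∀ e ∈ H, e.card = 3) (hNoC4 : ¬ HasBergeCycle H 4)
    {a b u u' : V} {ea eb ea' eb' : Finset V}
    (hea : ea ∈ H) (heb : eb ∈ H) (hea' : ea' ∈ H) (heb' : eb' ∈ H)
    (h1 : ea ≠ eb) (h2 : ea' ≠ eb')
    (haea : a ∈ ea) (haea' : a ∈ ea') (hbeb : b ∈ eb) (hbeb' : b ∈ eb')
    (huea : u ∈ ea) (hueb : u ∈ eb) (hu'ea' : u' ∈ ea') (hu'eb' : u' ∈ eb')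
    (hab : a ≠ b) (hau : a ≠ u) (hau' : a ≠ u') (hbu : b ≠ u) (hbu' : b ≠ u')
    (huu' : u ≠ u') : ea = ea' ∨ eb = eb' := by
  by_contra h
  push_neg at h
  obtain ⟨haa, hbb⟩ := h
  have hcross1 : ea ≠ eb' := fun h =>
    four_in_three (hUnif ea hea) haea huea (by rw [h]; exact hbeb') (by rw [h]; exact hu'eb')
      hau hab hau' hbu.symm huu' hbu'
  have hcross2 : eb ≠ ea' := fun h =>
    four_in_three (hUnif eb heb) hbeb hueb (by rw [h]; exact haea') (by rw [h]; exact hu'ea')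
      hbu hab.symm hbu' hau.symm huu' hau'
  exact hNoC4 (berge4 H hea heb heb' hea'
    hau hab hau' hbu.symm huu' hbu'
    h1 hcross1 haa hbb hcross2 h2.symm
    haea huea hueb hbeb hbeb' hu'eb' hu'ea' haea')


/-- Vertices outside `N1 ∪ {v}` that are "doubles" through the `v`-edge `f`. -/
def Dub {V : Type*} [DecidableEq V] [Fintype V] (H : Finset (Finset V)) (v : V)
    (f : Finset V) : Finset V :=
  Finset.univ.filter fun u =>
    u ∉ N1 H v ∧ ∃ ea ∈ H, ∃ eb ∈ H, ea ≠ eb ∧ v ∉ ea ∧ v ∉ eb ∧ u ∈ ea ∧ u ∈ eb ∧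
      ∃ a ∈ f, ∃ b ∈ f, a ∈ N1 H v ∧ b ∈ N1 H v ∧ a ≠ b ∧ a ∈ ea ∧ b ∈ eb

lemma dubCard {V : Type*} [DecidableEq V] [Fintype V] {H : Finset (Finset V)}
    (hUnif : ∀ e ∈ H, e.card = 3) (hLin : IsLinear H) (hNoC4 : ¬ HasBergeCycle H 4)
    {v : V} {f : Finset V} (hfH : f ∈ H) (hvf : v ∈ f) :
    (Dub H v f).card ≤ 2 := by
  by_contra hcon
  push_neg at hcon
  rw [Finset.two_lt_card_iff] at hcon
  obtain ⟨u1, u2, u3, hu1, hu2, hu3, h12, h13, h23⟩ := hcon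
  -- normalize: the two `N1` vertices of `f` are its two non-`v` elements
  have hf3 : f.card = 3 := hUnif f hfH
  have herase : (f.erase v).card = 2 := by
    rw [Finset.card_erase_of_mem hvf, hf3]
  obtain ⟨a0, b0, hab0, hfe⟩ := Finset.card_eq_two.mp herase
  have ha0f : a0 ∈ f.erase v := by rw [hfe]; simp
  have hb0f : b0 ∈ f.erase v := by rw [hfe]; simp
  have key : ∀ u ∈ Dub H v f, u ∉ N1 H v ∧ ∃ ea eb, ea ∈ H ∧ eb ∈ H ∧ ea ≠ eb ∧
      v ∉ ea ∧ v ∉ eb ∧ u ∈ ea ∧ u ∈ eb ∧ a0 ∈ ea ∧ b0 ∈ eb ∧ a0 ∈ N1 H v ∧ b0 ∈ N1 H v := by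
    intro u hu
    rw [Dub, Finset.mem_filter] at hu
    obtain ⟨-, hN, ea, hea, eb, heb, hne, hva, hvb, hua, hub, a, haf, b, hbf, haN, hbN, hab,
      haea, hbeb⟩ := hu
    have ha' : a ∈ f.erase v := Finset.mem_erase.mpr ⟨(mem_N1.mp haN).1, haf⟩
    have hb' : b ∈ f.erase v := Finset.mem_erase.mpr ⟨(mem_N1.mp hbN).1, hbf⟩
    rw [hfe] at ha' hb'
    simp only [Finset.mem_insert, Finset.mem_singleton] at ha' hb'
    refine ⟨hN, ?_⟩
    rcases ha' with rfl|rfl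
    · rcases hb' with rfl|rfl
      · exact absurd rfl hab
      · exact ⟨ea, eb, hea, heb, hne, hva, hvb, hua, hub, haea, hbeb, haN, hbN⟩
    · rcases hb' with rfl|rfl
      · exact ⟨eb, ea, heb, hea, hne.symm, hvb, hva, hub, hua, hbeb, haea, hbN, haN⟩
      · exact absurd rfl hab
  obtain ⟨hN1, ea1, eb1, hea1, heb1, hne1, hva1, hvb1, hu1a, hu1b, ha1, hb1, haN, hbN⟩ :=
    key u1 hu1
  obtain ⟨hN2, ea2, eb2, hea2, heb2, hne2, hva2, hvb2, hu2a, hu2b, ha2, hb2, -, -⟩ := key u2 hu2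
  obtain ⟨hN3, ea3, eb3, hea3, heb3, hne3, hva3, hvb3, hu3a, hu3b, ha3, hb3, -, -⟩ := key u3 hu3
  have hau : ∀ u, u ∉ N1 H v → a0 ≠ u := fun u hu h => hu (h ▸ haN)
  have hbu : ∀ u, u ∉ N1 H v → b0 ≠ u := fun u hu h => hu (h ▸ hbN)
  have p12 := sharePair hUnif hNoC4 hea1 heb1 hea2 heb2 hne1 hne2 ha1 ha2 hb1 hb2
    hu1a hu1b hu2a hu2b hab0 (hau u1 hN1) (hau u2 hN2) (hbu u1 hN1) (hbu u2 hN2) h12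
  have p13 := sharePair hUnif hNoC4 hea1 heb1 hea3 heb3 hne1 hne3 ha1 ha3 hb1 hb3
    hu1a hu1b hu3a hu3b hab0 (hau u1 hN1) (hau u3 hN3) (hbu u1 hN1) (hbu u3 hN3) h13
  have p23 := sharePair hUnif hNoC4 hea2 heb2 hea3 heb3 hne2 hne3 ha2 ha3 hb2 hb3
    hu2a hu2b hu3a hu3b hab0 (hau u2 hN2) (hau u3 hN3) (hbu u2 hN2) (hbu u3 hN3) h23
  -- In every case some edge contains `a0` (or `b0`) together with `u1, u2, u3`.
  rcases p12 with hA12 | hB12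
  · rcases p13 with hA13 | hB13
    · -- ea1 = ea2 = ea3 contains a0, u1, u2, u3
      exact four_in_three (hUnif ea1 hea1) ha1 hu1a (hA12 ▸ hu2a) (hA13 ▸ hu3a)
        (hau u1 hN1) (hau u2 hN2) (hau u3 hN3) h12 h13 h23
    · rcases p23 with hA23 | hB23
      · -- ea2 = ea3, ea1 = ea2 : same
        exact four_in_three (hUnif ea1 hea1) ha1 hu1a (hA12 ▸ hu2a)
          (by rw [hA12, hA23]; exact hu3a)
          (hau u1 hN1) (hau u2 hN2) (hau u3 hN3) h12 h13 h23
      · -- eb1 = eb3 and eb2 = eb3: eb1 contains b0, u1, u2, u3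
        exact four_in_three (hUnif eb1 heb1) hb1 hu1b (by rw [hB13, ← hB23]; exact hu2b)
          (hB13 ▸ hu3b)
          (hbu u1 hN1) (hbu u2 hN2) (hbu u3 hN3) h12 h13 h23
  · rcases p13 with hA13 | hB13
    · rcases p23 with hA23 | hB23
      · -- ea1 = ea3, ea2 = ea3: ea1 contains a0,u1,u2,u3
        exact four_in_three (hUnif ea1 hea1) ha1 hu1a (by rw [hA13, ← hA23]; exact hu2a)
          (hA13 ▸ hu3a)
          (hau u1 hN1) (hau u2 hN2) (hau u3 hN3) h12 h13 h23
      · -- eb1 = eb2, eb2 = eb3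
        exact four_in_three (hUnif eb1 heb1) hb1 hu1b (hB12 ▸ hu2b)
          (by rw [hB12, hB23]; exact hu3b)
          (hbu u1 hN1) (hbu u2 hN2) (hbu u3 hN3) h12 h13 h23
    · -- eb1 = eb2, eb1 = eb3
      exact four_in_three (hUnif eb1 heb1) hb1 hu1b (hB12 ▸ hu2b) (hB13 ▸ hu3b)
        (hbu u1 hN1) (hbu u2 hN2) (hbu u3 hN3) h12 h13 h23


/-- Edges avoiding `v` with at least two vertices in `N1`. -/
def Shadow {V : Type*} [DecidableEq V] (H : Finset (Finset V)) (v : V) : Finset (Finset V) :=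
  H.filter fun e => v ∉ e ∧ 2 ≤ (e ∩ N1 H v).card

lemma shadowDeg {V : Type*} [DecidableEq V] {H : Finset (Finset V)}
    (hUnif : ∀ e ∈ H, e.card = 3) (hLin : IsLinear H) (hNoC4 : ¬ HasBergeCycle H 4)
    {v x : V} (hx : x ∈ N1 H v) :
    ((Shadow H v).filter fun e => x ∈ e).card ≤ 2 := by
  by_contra hcon
  push_neg at hcon
  rw [Finset.two_lt_card_iff] at hcon
  obtain ⟨e1, e2, e3, he1, he2, he3, h12, h13, h23⟩ := hcon
  simp only [Shadow, Finset.mem_filter] at he1 he2 he3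
  obtain ⟨⟨he1H, hv1, hc1⟩, hx1⟩ := he1
  obtain ⟨⟨he2H, hv2, hc2⟩, hx2⟩ := he2
  obtain ⟨⟨he3H, hv3, hc3⟩, hx3⟩ := he3
  have part : ∀ (e : Finset V), x ∈ e → 2 ≤ (e ∩ N1 H v).card →
      ∃ y, y ∈ e ∧ y ∈ N1 H v ∧ y ≠ x := by
    intro e hxe hce
    obtain ⟨y, hy, hyx⟩ := Finset.exists_mem_ne (s := e ∩ N1 H v) (by omega) x
    rw [Finset.mem_inter] at hy
    exact ⟨y, hy.1, hy.2, hyx⟩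
  obtain ⟨y1, hy1e, hy1N, hy1x⟩ := part e1 hx1 hc1
  obtain ⟨y2, hy2e, hy2N, hy2x⟩ := part e2 hx2 hc2
  obtain ⟨y3, hy3e, hy3N, hy3x⟩ := part e3 hx3 hc3
  have hyne : ∀ {ya yb : V} {ea eb : Finset V}, ea ∈ H → eb ∈ H → ea ≠ eb →
      ya ∈ ea → yb ∈ eb → ya ≠ x → x ∈ ea → x ∈ eb → ya ≠ yb := by
    intro ya yb ea eb hea heb hne hya hyb hyax hxa hxb h
    exact hne (lin_eq hLin hea heb hxa hxb hya (h ▸ hyb) (Ne.symm hyax))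
  have h12' : y1 ≠ y2 := hyne he1H he2H h12 hy1e hy2e hy1x hx1 hx2
  have h13' : y1 ≠ y3 := hyne he1H he3H h13 hy1e hy3e hy1x hx1 hx3
  have h23' : y2 ≠ y3 := hyne he2H he3H h23 hy2e hy3e hy2x hx2 hx3
  obtain ⟨hy1v, f1, hf1H, hvf1, hy1f1⟩ := mem_N1.mp hy1N
  obtain ⟨hy2v, f2, hf2H, hvf2, hy2f2⟩ := mem_N1.mp hy2N
  obtain ⟨hy3v, f3, hf3H, hvf3, hy3f3⟩ := mem_N1.mp hy3N
  have hxy1 : x ≠ y1 := Ne.symm hy1x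
  have e12 : f1 = f2 := L1 hNoC4 hf1H hf2H he1H he2H hvf1 hvf2 hy1f1 hy2f2 h12 hv1 hv2
    hy1e hy2e hx1 hx2 h12' (Ne.symm hy1x) (Ne.symm hy2x)
  have e13 : f1 = f3 := L1 hNoC4 hf1H hf3H he1H he3H hvf1 hvf3 hy1f1 hy3f3 h13 hv1 hv3
    hy1e hy3e hx1 hx3 h13' (Ne.symm hy1x) (Ne.symm hy3x)
  exact four_in_three (hUnif f1 hf1H) hvf1 hy1f1 (e12 ▸ hy2f2) (e13 ▸ hy3f3)
    (Ne.symm hy1v) (Ne.symm hy2v) (Ne.symm hy3v) h12' h13' h23'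

lemma shadowCount {V : Type*} [DecidableEq V] {H : Finset (Finset V)}
    (hUnif : ∀ e ∈ H, e.card = 3) (hLin : IsLinear H) (hNoC4 : ¬ HasBergeCycle H 4)
    (v : V) : (Shadow H v).card ≤ (N1 H v).card := by
  have h1 : 2 * (Shadow H v).card ≤ ∑ e ∈ Shadow H v, (e ∩ N1 H v).card := by
    rw [Nat.mul_comm]
    calc (Shadow H v).card * 2 = ∑ _e ∈ Shadow H v, 2 := by rw [Finset.sum_const, smul_eq_mul]
    _ ≤ _ := Finset.sum_le_sum (fun e he => ((Finset.mem_filter.mp he).2).2)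
  have h2 : ∑ e ∈ Shadow H v, (e ∩ N1 H v).card
      = ∑ x ∈ N1 H v, ((Shadow H v).filter fun e => x ∈ e).card := by
    have step : ∀ e ∈ Shadow H v, (e ∩ N1 H v).card = ∑ x ∈ N1 H v, if x ∈ e then 1 else 0 := by
      intro e _
      rw [← Finset.card_filter, Finset.filter_mem_eq_inter, Finset.inter_comm]
    rw [Finset.sum_congr rfl step, Finset.sum_comm]
    exact Finset.sum_congr rfl fun x _ => (Finset.card_filter _ _).symm
  have h3 : ∑ x ∈ N1 H v, ((Shadow H v).filter fun e => x ∈ e).card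
      ≤ 2 * (N1 H v).card := by
    calc ∑ x ∈ N1 H v, ((Shadow H v).filter fun e => x ∈ e).card
        ≤ ∑ _x ∈ N1 H v, 2 := Finset.sum_le_sum fun x hx => shadowDeg hUnif hLin hNoC4 hx
      _ = 2 * (N1 H v).card := by rw [Finset.sum_const, smul_eq_mul, Nat.mul_comm]
  omega


/-- The set of incidence pairs `(x, e)` with `x ∈ N1`, `e` an edge avoiding `v`
containing both `x` and `u`. -/
def Pset {V : Type*} [DecidableEq V] (H : Finset (Finset V)) (v u : V) :
    Finset (V × Finset V) :=
  ((N1 H v) ×ˢ H).filter fun q => q.1 ∈ q.2 ∧ v ∉ q.2 ∧ u ∈ q.2 ∧ q.1 ≠ u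

lemma mem_Pset {V : Type*} [DecidableEq V] {H : Finset (Finset V)} {v u : V}
    {q : V × Finset V} : q ∈ Pset H v u ↔
    q.1 ∈ N1 H v ∧ q.2 ∈ H ∧ q.1 ∈ q.2 ∧ v ∉ q.2 ∧ u ∈ q.2 ∧ q.1 ≠ u := by
  simp only [Pset, Finset.mem_filter, Finset.mem_product]
  tauto

lemma claimA {V : Type*} [DecidableEq V] {H : Finset (Finset V)}
    (hUnif : ∀ e ∈ H, e.card = 3) (hLin : IsLinear H) (hNoC4 : ¬ HasBergeCycle H 4)
    {v u : V} : (Pset H v u).card ≤ 2 := by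
  by_contra hcon
  push_neg at hcon
  rw [Finset.two_lt_card_iff] at hcon
  obtain ⟨q1, q2, q3, hq1, hq2, hq3, h12, h13, h23⟩ := hcon
  obtain ⟨hx1N, he1H, hx1e1, hv1, hu1, hx1u⟩ := mem_Pset.mp hq1
  obtain ⟨hx2N, he2H, hx2e2, hv2, hu2, hx2u⟩ := mem_Pset.mp hq2
  obtain ⟨hx3N, he3H, hx3e3, hv3, hu3, hx3u⟩ := mem_Pset.mp hq3
  have xne : ∀ {qa qb : V × Finset V}, qa ≠ qb → qa ∈ Pset H v u → qb ∈ Pset H v u →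
      qa.1 ≠ qb.1 := by
    intro qa qb hne ha hb hx
    obtain ⟨-, heaH, hxa, hva, hua, hxau⟩ := mem_Pset.mp ha
    obtain ⟨-, hebH, hxb, hvb, hub, -⟩ := mem_Pset.mp hb
    have hee : qa.2 = qb.2 := lin_eq hLin heaH hebH hxa (hx ▸ hxb) hua hub hxau
    exact hne (Prod.ext hx hee)
  have hx12 : q1.1 ≠ q2.1 := xne h12 hq1 hq2
  have hx13 : q1.1 ≠ q3.1 := xne h13 hq1 hq3
  have hx23 : q2.1 ≠ q3.1 := xne h23 hq2 hq3
  obtain ⟨hx1v, f1, hf1H, hvf1, hxf1⟩ := mem_N1.mp hx1N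
  obtain ⟨hx2v, f2, hf2H, hvf2, hxf2⟩ := mem_N1.mp hx2N
  obtain ⟨hx3v, f3, hf3H, hvf3, hxf3⟩ := mem_N1.mp hx3N
  -- all f's equal, whatever the pattern of coincidences among the e's
  have hf12 : f1 = f2 := by
    by_cases h12e : q1.2 = q2.2
    · by_cases h13e : q1.2 = q3.2
      · exact (four_in_three (hUnif q1.2 he1H) hx1e1 (h12e ▸ hx2e2)
          (h13e ▸ hx3e3) hu1 hx12 hx13 hx1u hx23 hx2u hx3u).elim
      · have a13 := L1 hNoC4 hf1H hf3H he1H he3H hvf1 hvf3 hxf1 hxf3 h13e hv1 hv3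
          hx1e1 hx3e3 hu1 hu3 hx13 (Ne.symm hx1u) (Ne.symm hx3u)
        have h23e : q2.2 ≠ q3.2 := by rw [← h12e]; exact h13e
        have a23 := L1 hNoC4 hf2H hf3H he2H he3H hvf2 hvf3 hxf2 hxf3 h23e hv2 hv3
          hx2e2 hx3e3 hu2 hu3 hx23 (Ne.symm hx2u) (Ne.symm hx3u)
        rw [a13, a23]
    · exact L1 hNoC4 hf1H hf2H he1H he2H hvf1 hvf2 hxf1 hxf2 h12e hv1 hv2
        hx1e1 hx2e2 hu1 hu2 hx12 (Ne.symm hx1u) (Ne.symm hx2u)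
  have hf13 : f1 = f3 := by
    by_cases h13e : q1.2 = q3.2
    · by_cases h12e : q1.2 = q2.2
      · exact (four_in_three (hUnif q1.2 he1H) hx1e1 (h12e ▸ hx2e2)
          (h13e ▸ hx3e3) hu1 hx12 hx13 hx1u hx23 hx2u hx3u).elim
      · have a12 := L1 hNoC4 hf1H hf2H he1H he2H hvf1 hvf2 hxf1 hxf2 h12e hv1 hv2
          hx1e1 hx2e2 hu1 hu2 hx12 (Ne.symm hx1u) (Ne.symm hx2u)
        have h23e : q2.2 ≠ q3.2 := by rw [← h13e]; exact fun h => h12e h.symm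
        have a23 := L1 hNoC4 hf2H hf3H he2H he3H hvf2 hvf3 hxf2 hxf3 h23e hv2 hv3
          hx2e2 hx3e3 hu2 hu3 hx23 (Ne.symm hx2u) (Ne.symm hx3u)
        rw [a12, a23]
    · exact L1 hNoC4 hf1H hf3H he1H he3H hvf1 hvf3 hxf1 hxf3 h13e hv1 hv3
        hx1e1 hx3e3 hu1 hu3 hx13 (Ne.symm hx1u) (Ne.symm hx3u)
  exact four_in_three (hUnif f1 hf1H) hvf1 hxf1 (hf12 ▸ hxf2) (hf13 ▸ hxf3)
    (Ne.symm hx1v) (Ne.symm hx2v) (Ne.symm hx3v) hx12 hx13 hx23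

lemma sumP {V : Type*} [Fintype V] [DecidableEq V] {H : Finset (Finset V)}
    (hUnif : ∀ e ∈ H, e.card = 3) (v : V) :
    ∑ u ∈ Finset.univ, (Pset H v u).card
      = ∑ x ∈ N1 H v, 2 * (H.filter fun e => x ∈ e ∧ v ∉ e).card := by
  calc ∑ u ∈ Finset.univ, (Pset H v u).card
      = ∑ u ∈ Finset.univ, ∑ q ∈ (N1 H v) ×ˢ H,
          if q.1 ∈ q.2 ∧ v ∉ q.2 ∧ u ∈ q.2 ∧ q.1 ≠ u then 1 else 0 :=
        Finset.sum_congr rfl fun u _ => Finset.card_filter _ _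
    _ = ∑ q ∈ (N1 H v) ×ˢ H, ∑ u ∈ Finset.univ,
          (if q.1 ∈ q.2 ∧ v ∉ q.2 ∧ u ∈ q.2 ∧ q.1 ≠ u then 1 else 0) := Finset.sum_comm
    _ = ∑ q ∈ (N1 H v) ×ˢ H, (if q.1 ∈ q.2 ∧ v ∉ q.2 then 2 else 0) := by
        refine Finset.sum_congr rfl fun q hq => ?_
        obtain ⟨hxN, heH⟩ := Finset.mem_product.mp hq
        by_cases hc : q.1 ∈ q.2 ∧ v ∉ q.2
        · rw [if_pos hc]
          have hiff : ∀ u : V, (q.1 ∈ q.2 ∧ v ∉ q.2 ∧ u ∈ q.2 ∧ q.1 ≠ u)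
              ↔ u ∈ q.2.erase q.1 := by
            intro u
            simp only [Finset.mem_erase]
            constructor
            · rintro ⟨-, -, h1, h2⟩; exact ⟨Ne.symm h2, h1⟩
            · rintro ⟨h1, h2⟩; exact ⟨hc.1, hc.2, h2, Ne.symm h1⟩
          calc ∑ u ∈ Finset.univ,
                (if q.1 ∈ q.2 ∧ v ∉ q.2 ∧ u ∈ q.2 ∧ q.1 ≠ u then 1 else 0)
              = ∑ u ∈ Finset.univ, (if u ∈ q.2.erase q.1 then 1 else 0) :=
                Finset.sum_congr rfl fun u _ => by
                  rw [if_congr (hiff u) rfl rfl]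
            _ = (Finset.univ.filter fun u => u ∈ q.2.erase q.1).card :=
                (Finset.card_filter _ _).symm
            _ = 2 := by
                rw [Finset.filter_mem_eq_inter, Finset.univ_inter,
                  Finset.card_erase_of_mem hc.1, hUnif q.2 heH]
        · rw [if_neg hc]
          exact Finset.sum_eq_zero fun u _ => if_neg fun hh => hc ⟨hh.1, hh.2.1⟩
    _ = ∑ x ∈ N1 H v, ∑ e ∈ H, (if x ∈ e ∧ v ∉ e then 2 else 0) :=
        Finset.sum_product _ _ _
    _ = ∑ x ∈ N1 H v, 2 * (H.filter fun e => x ∈ e ∧ v ∉ e).card := by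
        refine Finset.sum_congr rfl fun x _ => ?_
        rw [Finset.card_filter, Finset.mul_sum]
        exact Finset.sum_congr rfl fun e _ => by split <;> simp



/-- Degree split: the degree of `x ∈ N1` is at most `1` plus the number of
edges at `x` avoiding `v`. -/
lemma degSplit {V : Type*} [DecidableEq V] {H : Finset (Finset V)} (hLin : IsLinear H)
    {v x : V} (hx : x ∈ N1 H v) :
    hyperDeg H x ≤ 1 + (H.filter fun e => x ∈ e ∧ v ∉ e).card := by
  have hxv : x ≠ v := (mem_N1.mp hx).1
  have hsplit := Finset.card_filter_add_card_filter_not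
    (s := H.filter fun e => x ∈ e) (p := fun e => v ∈ e)
  have h1 : ((H.filter fun e => x ∈ e).filter fun e => v ∈ e).card ≤ 1 := by
    rw [Finset.card_le_one]
    intro e he f hf
    simp only [Finset.mem_filter] at he hf
    exact lin_eq hLin he.1.1 hf.1.1 he.1.2 hf.1.2 he.2 hf.2 hxv
  have h2 : ((H.filter fun e => x ∈ e).filter fun e => ¬ v ∈ e)
      = H.filter fun e => x ∈ e ∧ v ∉ e := by
    rw [Finset.filter_filter]
  rw [hyperDeg, ← hsplit, h2]
  omega

lemma N1card {V : Type*} [DecidableEq V] {H : Finset (Finset V)}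
    (hUnif : ∀ e ∈ H, e.card = 3) (v : V) :
    (N1 H v).card ≤ 2 * hyperDeg H v := by
  have hsub : N1 H v ⊆ (H.filter fun e => v ∈ e).biUnion fun e => e.erase v := by
    intro x hx
    obtain ⟨hxv, e, heH, hve, hxe⟩ := mem_N1.mp hx
    exact Finset.mem_biUnion.mpr ⟨e, Finset.mem_filter.mpr ⟨heH, hve⟩,
      Finset.mem_erase.mpr ⟨hxv, hxe⟩⟩
  calc (N1 H v).card ≤ _ := Finset.card_le_card hsub
    _ ≤ ∑ e ∈ H.filter fun e => v ∈ e, (e.erase v).card := Finset.card_biUnion_le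
    _ ≤ ∑ _e ∈ H.filter fun e => v ∈ e, 2 := by
        refine Finset.sum_le_sum fun e he => ?_
        obtain ⟨heH, hve⟩ := Finset.mem_filter.mp he
        rw [Finset.card_erase_of_mem hve, hUnif e heH]
    _ = 2 * hyperDeg H v := by rw [Finset.sum_const, smul_eq_mul, Nat.mul_comm]; rfl


theorem stmt_4 {V : Type*} [Fintype V] [DecidableEq V]
    (H : Finset (Finset V))
    (hUnif : ∀ e ∈ H, e.card = 3)
    (hLin : IsLinear H)
    (hNoC4 : ¬ HasBergeCycle H 4)
    (v : V) :
    ∑ x ∈ N1 H v, 2 * hyperDeg H x ≤ Fintype.card V + 12 * hyperDeg H v := by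
  have step1 : ∑ x ∈ N1 H v, 2 * hyperDeg H x
      ≤ 2 * (N1 H v).card + ∑ u ∈ Finset.univ, (Pset H v u).card := by
    have h1 : ∀ x ∈ N1 H v,
        2 * hyperDeg H x ≤ 2 + 2 * (H.filter fun e => x ∈ e ∧ v ∉ e).card := by
      intro x hx
      have := degSplit hLin hx
      omega
    calc ∑ x ∈ N1 H v, 2 * hyperDeg H x
        ≤ ∑ x ∈ N1 H v, (2 + 2 * (H.filter fun e => x ∈ e ∧ v ∉ e).card) :=
          Finset.sum_le_sum h1
      _ = 2 * (N1 H v).card + ∑ x ∈ N1 H v, 2 * (H.filter fun e => x ∈ e ∧ v ∉ e).card := by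
          rw [Finset.sum_add_distrib, Finset.sum_const, smul_eq_mul, Nat.mul_comm]
      _ = 2 * (N1 H v).card + ∑ u ∈ Finset.univ, (Pset H v u).card := by
          rw [sumP hUnif v]
  set Dset := Finset.univ.filter fun u => 2 ≤ (Pset H v u).card with hD
  have step2 : ∑ u ∈ Finset.univ, (Pset H v u).card ≤ Fintype.card V + Dset.card := by
    calc ∑ u ∈ Finset.univ, (Pset H v u).card
        ≤ ∑ u ∈ Finset.univ, (1 + if u ∈ Dset then 1 else 0) := by
          refine Finset.sum_le_sum fun u _ => ?_
          by_cases hu : u ∈ Dset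
          · rw [if_pos hu]
            exact claimA hUnif hLin hNoC4
          · rw [if_neg hu]
            have h2 : ¬ 2 ≤ (Pset H v u).card := fun h =>
              hu (Finset.mem_filter.mpr ⟨Finset.mem_univ u, h⟩)
            omega
      _ = Fintype.card V + Dset.card := by
          rw [Finset.sum_add_distrib, Finset.sum_const, smul_eq_mul, Nat.mul_one,
            ← Finset.card_filter, Finset.filter_mem_eq_inter, Finset.univ_inter,
            Finset.card_univ]
  have step3 : Dset ⊆ ((N1 H v) ∪ ((Shadow H v).biUnion fun e => e \ N1 H v))
      ∪ ((H.filter fun e => v ∈ e).biUnion (Dub H v)) := by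
    intro u hu
    have h2le : 2 ≤ (Pset H v u).card := (Finset.mem_filter.mp hu).2
    obtain ⟨q1, hq1, q2, hq2, hne⟩ :=
      (Finset.one_lt_card (s := Pset H v u)).mp (by omega)
    obtain ⟨hx1N, he1H, hx1e1, hv1, hu1, hx1u⟩ := mem_Pset.mp hq1
    obtain ⟨hx2N, he2H, hx2e2, hv2, hu2, hx2u⟩ := mem_Pset.mp hq2
    rw [Finset.mem_union, Finset.mem_union]
    by_cases huN : u ∈ N1 H v
    · exact Or.inl (Or.inl huN)
    by_cases h12e : q1.2 = q2.2
    · refine Or.inl (Or.inr (Finset.mem_biUnion.mpr ⟨q1.2, ?_, ?_⟩))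
      · have hx12 : q1.1 ≠ q2.1 := fun h => hne (Prod.ext h h12e)
        refine Finset.mem_filter.mpr ⟨he1H, hv1, ?_⟩
        have hsub : ({q1.1, q2.1} : Finset V) ⊆ q1.2 ∩ N1 H v := by
          intro z hz
          simp only [Finset.mem_insert, Finset.mem_singleton] at hz
          rcases hz with rfl|rfl
          · exact Finset.mem_inter.mpr ⟨hx1e1, hx1N⟩
          · exact Finset.mem_inter.mpr ⟨h12e ▸ hx2e2, hx2N⟩
        calc 2 = ({q1.1, q2.1} : Finset V).card := (Finset.card_pair hx12).symm
          _ ≤ _ := Finset.card_le_card hsub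
      · exact Finset.mem_sdiff.mpr ⟨hu1, huN⟩
    · have hx12 : q1.1 ≠ q2.1 := fun h =>
        h12e (lin_eq hLin he1H he2H hx1e1 (h ▸ hx2e2) hu1 hu2 hx1u)
      obtain ⟨hx1v, f1, hf1H, hvf1, hxf1⟩ := mem_N1.mp hx1N
      obtain ⟨hx2v, f2, hf2H, hvf2, hxf2⟩ := mem_N1.mp hx2N
      have hff := L1 hNoC4 hf1H hf2H he1H he2H hvf1 hvf2 hxf1 hxf2 h12e hv1 hv2
        hx1e1 hx2e2 hu1 hu2 hx12 (Ne.symm hx1u) (Ne.symm hx2u)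
      refine Or.inr (Finset.mem_biUnion.mpr ⟨f1, Finset.mem_filter.mpr ⟨hf1H, hvf1⟩, ?_⟩)
      exact Finset.mem_filter.mpr ⟨Finset.mem_univ u, huN, q1.2, he1H, q2.2, he2H, h12e,
        hv1, hv2, hu1, hu2, q1.1, hxf1, q2.1, (hff ▸ hxf2), hx1N, hx2N, hx12, hx1e1, hx2e2⟩
  have c1 : (N1 H v).card ≤ 2 * hyperDeg H v := N1card hUnif v
  have c2 : ((Shadow H v).biUnion fun e => e \ N1 H v).card ≤ 2 * hyperDeg H v := by
    calc ((Shadow H v).biUnion fun e => e \ N1 H v).card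
        ≤ ∑ e ∈ Shadow H v, (e \ N1 H v).card := Finset.card_biUnion_le
      _ ≤ ∑ _e ∈ Shadow H v, 1 := by
          refine Finset.sum_le_sum fun e he => ?_
          obtain ⟨heH, hve, hc⟩ := Finset.mem_filter.mp he
          have h3 := hUnif e heH
          have h4 := Finset.card_sdiff_add_card_inter e (N1 H v)
          omega
      _ = (Shadow H v).card := by rw [Finset.sum_const, smul_eq_mul, Nat.mul_one]
      _ ≤ (N1 H v).card := shadowCount hUnif hLin hNoC4 v
      _ ≤ 2 * hyperDeg H v := c1
  have c3 : ((H.filter fun e => v ∈ e).biUnion (Dub H v)).card ≤ 2 * hyperDeg H v := by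
    calc ((H.filter fun e => v ∈ e).biUnion (Dub H v)).card
        ≤ ∑ f ∈ H.filter fun e => v ∈ e, (Dub H v f).card := Finset.card_biUnion_le
      _ ≤ ∑ _f ∈ H.filter fun e => v ∈ e, 2 :=
          Finset.sum_le_sum fun f hf =>
            dubCard hUnif hLin hNoC4 (Finset.mem_filter.mp hf).1 (Finset.mem_filter.mp hf).2
      _ = 2 * hyperDeg H v := by
          rw [Finset.sum_const, smul_eq_mul, Nat.mul_comm]
          rfl
  have cD : Dset.card ≤ 6 * hyperDeg H v := by
    have hs := Finset.card_le_card step3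
    have hu1 := Finset.card_union_le ((N1 H v) ∪ ((Shadow H v).biUnion fun e => e \ N1 H v))
      ((H.filter fun e => v ∈ e).biUnion (Dub H v))
    have hu2 := Finset.card_union_le (N1 H v) ((Shadow H v).biUnion fun e => e \ N1 H v)
    omega
  omega
end

section
/- Let H be a 3-uniform linear hypergraph containing no Berge cycle of length 4, let v be a vertex, and let x ∈ N₁(v). Then the number of hyperedges h containing x with |h ∩ N₁(v)| ≥ 2 is at most 3. -/
open Finset

lemma buildC4 {V : Type*} [DecidableEq V] (H : Finset (Finset V))
    (f1 e1 e2 f2 : Finset V) (hf1 : f1 ∈ H) (he1 : e1 ∈ H) (he2 : e2 ∈ H) (hf2 : f2 ∈ H)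
    (w y1 x y2 : V)
    (hw1 : w ∈ f1) (hy1f : y1 ∈ f1) (hy1e : y1 ∈ e1) (hxe1 : x ∈ e1)
    (hxe2 : x ∈ e2) (hy2e : y2 ∈ e2) (hy2f : y2 ∈ f2) (hwf2 : w ∈ f2)
    (hwx : w ≠ x) (hwy1 : w ≠ y1) (hwy2 : w ≠ y2) (hxy1 : x ≠ y1) (hxy2 : x ≠ y2)
    (hy12 : y1 ≠ y2) (he12 : e1 ≠ e2) (hf12 : f1 ≠ f2) (hwe1 : w ∉ e1) (hwe2 : w ∉ e2) :
    HasBergeCycle H 4 := by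
  have hf1e1 : f1 ≠ e1 := fun h => hwe1 (h ▸ hw1)
  have hf1e2 : f1 ≠ e2 := fun h => hwe2 (h ▸ hw1)
  have hf2e1 : f2 ≠ e1 := fun h => hwe1 (h ▸ hwf2)
  have hf2e2 : f2 ≠ e2 := fun h => hwe2 (h ▸ hwf2)
  refine ⟨![w, y1, x, y2], ![f1, e1, e2, f2], ?_, ?_, ?_⟩
  · intro i j hij
    fin_cases i <;> fin_cases j <;> simp_all <;> rfl
  · intro i j hij
    fin_cases i <;> fin_cases j <;> simp_all <;> rfl
  · intro i
    fin_cases i <;> exact ⟨by assumption, by assumption, by assumption⟩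

theorem stmt_5 {V : Type*} [Fintype V] [DecidableEq V]
    (H : Finset (Finset V))
    (hUnif : ∀ e ∈ H, e.card = 3)
    (hLin : IsLinear H)
    (hNoC4 : ¬ HasBergeCycle H 4)
    (v x : V) (hx : x ∈ N1 H v) :
    (H.filter fun h => x ∈ h ∧ 2 ≤ (h ∩ N1 H v).card).card ≤ 3 := by
  by_contra hcard
  push_neg at hcard
  set S := H.filter fun h => x ∈ h ∧ 2 ≤ (h ∩ N1 H v).card with hS
  have hxv : x ≠ v := Finset.ne_of_mem_erase hx
  -- at most one edge of S contains v
  have hone : (S.filter fun h => v ∈ h).card ≤ 1 := by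
    rw [Finset.card_le_one]
    intro a ha b hb
    by_contra hne
    simp only [Finset.mem_filter, hS] at ha hb
    have hle := hLin a ha.1.1 b hb.1.1 hne
    have hsub : ({v, x} : Finset V) ⊆ a ∩ b := by
      intro z hz
      simp only [Finset.mem_insert, Finset.mem_singleton] at hz
      rcases hz with rfl | rfl <;> simp_all [Finset.mem_inter]
    have := Finset.card_le_card hsub
    rw [Finset.card_insert_of_notMem (by simp [Ne.symm hxv]), Finset.card_singleton] at this
    omega
  have h3 : 2 < (S.filter fun h => v ∉ h).card := by
    have := Finset.card_filter_add_card_filter_not (s := S) (p := fun h => v ∈ h)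
    omega
  obtain ⟨a, b, c, ha, hb, hc, hab, hac, hbc⟩ := Finset.two_lt_card_iff.mp h3
  -- key extraction
  have key : ∀ h ∈ S.filter fun h => v ∉ h, ∃ y f, y ∈ h ∧ y ≠ x ∧ y ≠ v ∧
      f ∈ H ∧ v ∈ f ∧ y ∈ f := by
    intro h hh
    simp only [Finset.mem_filter, hS] at hh
    obtain ⟨⟨hH, hxh, hc2⟩, hvh⟩ := hh
    have hxint : x ∈ h ∩ N1 H v := Finset.mem_inter.mpr ⟨hxh, hx⟩
    obtain ⟨y, hy, hyx⟩ := Finset.exists_mem_ne (s := h ∩ N1 H v) (by omega) x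
    have hy' := Finset.mem_inter.mp hy
    have hyN : y ∈ N1 H v := hy'.2
    have hyv : y ≠ v := Finset.ne_of_mem_erase hyN
    obtain ⟨f, hf, hyf⟩ := Finset.mem_biUnion.mp (Finset.mem_of_mem_erase hyN)
    simp only [Finset.mem_filter, id] at hf hyf
    exact ⟨y, f, hy'.1, hyx, hyv, hf.1, hf.2, hyf⟩
  obtain ⟨ya, fa, hya, hyax, hyav, hfa, hvfa, hyafa⟩ := key a ha
  obtain ⟨yb, fb, hyb, hybx, hybv, hfb, hvfb, hybfb⟩ := key b hb
  obtain ⟨yc, fc, hyc, hycx, hycv, hfc, hvfc, hycfc⟩ := key c hc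
  -- basic facts about a, b, c
  have hmem : ∀ h ∈ S.filter fun h => v ∉ h, h ∈ H ∧ x ∈ h ∧ v ∉ h := by
    intro h hh
    simp only [Finset.mem_filter, hS] at hh
    exact ⟨hh.1.1, hh.1.2.1, hh.2⟩
  obtain ⟨haH, hxa, hva⟩ := hmem a ha
  obtain ⟨hbH, hxb, hvb⟩ := hmem b hb
  obtain ⟨hcH, hxc, hvc⟩ := hmem c hc
  -- y's are pairwise distinct
  have ydist : ∀ (e e' : Finset V) (y y' : V), e ∈ H → e' ∈ H → e ≠ e' →
      x ∈ e → x ∈ e' → y ∈ e → y ∈ e' → y ≠ x → y ≠ y' → True := fun _ _ _ _ _ _ _ _ _ _ _ _ _ => trivial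
  have ydiff : ∀ (e e' : Finset V) (y : V), e ∈ H → e' ∈ H → e ≠ e' →
      x ∈ e → x ∈ e' → y ≠ x → y ∈ e → ¬ (y ∈ e') := by
    intro e e' y heH he'H hne hxe hxe' hyx hye hye'
    have hle := hLin e heH e' he'H hne
    have hsub : ({x, y} : Finset V) ⊆ e ∩ e' := by
      intro z hz
      simp only [Finset.mem_insert, Finset.mem_singleton] at hz
      rcases hz with rfl | rfl <;> exact Finset.mem_inter.mpr ⟨by assumption, by assumption⟩
    have := Finset.card_le_card hsub
    rw [Finset.card_insert_of_notMem (by simp [Ne.symm hyx]), Finset.card_singleton] at this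
    omega
  have hyab : ya ≠ yb := fun h => ydiff a b ya haH hbH hab hxa hxb hyax hya (h ▸ hyb)
  have hyac : ya ≠ yc := fun h => ydiff a c ya haH hcH hac hxa hxc hyax hya (h ▸ hyc)
  have hybc : yb ≠ yc := fun h => ydiff b c yb hbH hcH hbc hxb hxc hybx hyb (h ▸ hyc)
  apply hNoC4
  rcases eq_or_ne fa fb with hf | hf
  · -- fa = fb, so fa ≠ fc
    have hfac : fa ≠ fc := by
      rintro rfl
      subst hf
      have hsub : ({v, ya, yb, yc} : Finset V) ⊆ fa := by
        intro z hz
        simp only [Finset.mem_insert, Finset.mem_singleton] at hz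
        rcases hz with rfl | rfl | rfl | rfl <;> assumption
      have h4 : ({v, ya, yb, yc} : Finset V).card = 4 := by
        rw [Finset.card_insert_of_notMem (by simp [Ne.symm hyav, Ne.symm hybv, Ne.symm hycv]),
            Finset.card_insert_of_notMem (by simp [hyab, hyac]),
            Finset.card_insert_of_notMem (by simp [hybc]), Finset.card_singleton]
      have := Finset.card_le_card hsub
      rw [hUnif fa hfa] at this
      omega
    exact buildC4 H fa a c fc hfa haH hcH hfc v ya x yc hvfa hyafa hya hxa hxc hyc hycfc hvfc
      (Ne.symm hxv) (Ne.symm hyav) (Ne.symm hycv) (Ne.symm hyax) (Ne.symm hycx) hyac hac hfac hva hvc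
  · exact buildC4 H fa a b fb hfa haH hbH hfb v ya x yb hvfa hyafa hya hxa hxb hyb hybfb hvfb
      (Ne.symm hxv) (Ne.symm hyav) (Ne.symm hybv) (Ne.symm hyax) (Ne.symm hybx) hyab hab hf hva hvb
end
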